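/- arXiv:2207.08965 — 2 statements merged into one kernel-verified Lean document; each statement's English description precedes it below -/
import Mathlib

section
/- Let P be a flow-based polytope with edge set E, fix an edge η = (s,t) ∈ E and a directed tree T with all edges in E. Let F_s(T) be the set of vertices f of P with Flip_f(T) ∈ Arb_s and f_η = 0, and let F_t(T) be the set of vertices f of P with Flip_f(T) ∈ Arb_t and f_η = 1. Then there exists a bijection π : F_s(T) → F_t(T) such that whenever π(f) = f', one has f_e = f'_e for all e ∈ E \ (T ∪ {η}). -/
open Finset

open scoped Classical

/-- The set `E₀` of non-loop directed edges on vertex set `Fin n`. -/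
def E0 (n : ℕ) : Finset (Fin n × Fin n) :=
  Finset.univ.filter (fun e => e.1 ≠ e.2)

/-- The reverse of a directed edge. -/
def rev {n : ℕ} (e : Fin n × Fin n) : Fin n × Fin n := (e.2, e.1)

/-- The underlying undirected (simple) graph of a set of directed edges. -/
def undirGraph (n : ℕ) (D : Finset (Fin n × Fin n)) : SimpleGraph (Fin n) where
  Adj u v := u ≠ v ∧ ((u, v) ∈ D ∨ (v, u) ∈ D)
  symm := ⟨fun u v h => ⟨h.1.symm, h.2.symm⟩⟩
  loopless := ⟨fun u h => h.1 rfl⟩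

/-- There is a directed walk from `i` to `j` using only edges in `D`. -/
def reachesIn (n : ℕ) (D : Finset (Fin n × Fin n)) (i j : Fin n) : Prop :=
  Relation.ReflTransGen (fun a b => (a, b) ∈ D) i j

/-- `T` is a directed tree: `n-1` non-loop directed edges whose underlying
undirected edges form a spanning tree of `Fin n`. -/
def IsDirTree (n : ℕ) (T : Finset (Fin n × Fin n)) : Prop :=
  T ⊆ E0 n ∧ T.card = n - 1 ∧ (undirGraph n T).Connected

/-- `A` is an arborescence rooted at `r`: a directed tree such that from every
vertex there is a directed walk to `r` using only edges of `A`. -/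
def IsArb (n : ℕ) (r : Fin n) (A : Finset (Fin n × Fin n)) : Prop :=
  IsDirTree n A ∧ ∀ v : Fin n, reachesIn n A v r

/-- `Flip_f` of a single edge: reverse the edge iff `f e = 1`. -/
noncomputable def flipEdge (n : ℕ) (f : Fin n × Fin n → ℝ) (e : Fin n × Fin n) :
    Fin n × Fin n :=
  if f e = 1 then rev e else e

/-- `Flip_f` of a set of edges. -/
noncomputable def flipSet (n : ℕ) (f : Fin n × Fin n → ℝ)
    (T : Finset (Fin n × Fin n)) : Finset (Fin n × Fin n) :=
  T.image (flipEdge n f)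

/-- Membership in the flow-based polytope with variable edge set `E` and
demands `d` (points are extended by zero outside `E`). -/
def memFlowPolytope (n : ℕ) (E : Finset (Fin n × Fin n)) (d : Fin n → ℤ)
    (x : Fin n × Fin n → ℝ) : Prop :=
  (∀ e, e ∉ E → x e = 0) ∧ (∀ e ∈ E, x e ∈ Set.Icc (0 : ℝ) 1) ∧
    ∀ v : Fin n, (∑ i, x (v, i)) - (∑ i, x (i, v)) = (d v : ℝ)

/-- A vertex of the flow-based polytope: a 0/1 point of the polytope. -/
def IsVertex (n : ℕ) (E : Finset (Fin n × Fin n)) (d : Fin n → ℤ)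
    (f : Fin n × Fin n → ℝ) : Prop :=
  memFlowPolytope n E d f ∧ ∀ e ∈ E, f e = 0 ∨ f e = 1

/-- The 0/1 indicator of a set of edges. -/
def ind (n : ℕ) (S : Finset (Fin n × Fin n)) : Fin n × Fin n → ℝ :=
  fun e => if e ∈ S then 1 else 0

/-- The vertices of the flow-based polytope, encoded by their supports
(sets of edges carrying flow `1`). -/
noncomputable def flowVertices (n : ℕ) (E : Finset (Fin n × Fin n)) (d : Fin n → ℤ) :
    Finset (Finset (Fin n × Fin n)) :=
  Finset.univ.filter (fun S => S ⊆ E ∧ memFlowPolytope n E d (ind n S))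

/-- The polynomial `P_{f,r}(x)` of the Bernoulli factory. Since `f` is 0/1,
`x_e^{f_e}(1-x_e)^{1-f_e}` is `x_e` if `f_e = 1` and `1 - x_e` otherwise, and
`x_e^{1-f_e}(1-x_e)^{f_e}` is `1 - x_e` if `f_e = 1` and `x_e` otherwise. -/
noncomputable def Pfr (n : ℕ) (E : Finset (Fin n × Fin n))
    (f : Fin n × Fin n → ℝ) (r : Fin n) (x : Fin n × Fin n → ℝ) : ℝ :=
  (∏ e ∈ E, if f e = 1 then x e else 1 - x e) *
    ∑ T ∈ Finset.univ.filter
        (fun T : Finset (Fin n × Fin n) =>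
          IsDirTree n T ∧ T ⊆ E ∧ IsArb n r (flipSet n f T)),
      ∏ e ∈ T, (if f e = 1 then 1 - x e else x e)

/-- Membership in the circulation hyperplane `Circ̄`. -/
def memCircBar (n : ℕ) (y : Fin n × Fin n → ℝ) : Prop :=
  ∀ v : Fin n,
    (∑ i ∈ Finset.univ.filter (fun i => i ≠ v), y (v, i)) -
      (∑ i ∈ Finset.univ.filter (fun i => i ≠ v), y (i, v)) = 0

/-- The arborescence-generating polynomial `SArb_r(y)`. -/
noncomputable def SArb (n : ℕ) (r : Fin n) (y : Fin n × Fin n → ℝ) : ℝ :=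
  ∑ A ∈ Finset.univ.filter (fun A : Finset (Fin n × Fin n) => IsArb n r A),
    ∏ e ∈ A, y e

/-- The map `M_f`: `M_f(x)_e = x_e (1 - f_e) + (1 - x_ē) f_ē`. -/
def Mf (n : ℕ) (f x : Fin n × Fin n → ℝ) : Fin n × Fin n → ℝ :=
  fun e => x e * (1 - f e) + (1 - x (rev e)) * f (rev e)


-- ### auxiliary

/-- Undirected reachability through a directed edge set. -/
def reachU (n : ℕ) (D : Finset (Fin n × Fin n)) (i j : Fin n) : Prop :=
  Relation.ReflTransGen (fun a b => (a, b) ∈ D ∨ (b, a) ∈ D) i j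

lemma reachU.refl {n D} {i : Fin n} : reachU n D i i := Relation.ReflTransGen.refl

lemma reachU.trans {n D} {i j k : Fin n} (h : reachU n D i j) (h' : reachU n D j k) :
    reachU n D i k := Relation.ReflTransGen.trans h h'

lemma reachU.symm {n D} {i j : Fin n} (h : reachU n D i j) : reachU n D j i :=
  haveI : Std.Symm (fun a b : Fin n => (a, b) ∈ D ∨ (b, a) ∈ D) := ⟨fun _ _ hh => hh.symm⟩
  Relation.ReflTransGen.symmetric.symm _ _ h

lemma reachU_mono {n} {D D' : Finset (Fin n × Fin n)} (hDD : D ⊆ D') {i j : Fin n}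
    (h : reachU n D i j) : reachU n D' i j :=
  Relation.ReflTransGen.mono (fun a b hab => hab.imp (@hDD _) (@hDD _)) _ _ h

lemma reachesIn_mono {n} {D D' : Finset (Fin n × Fin n)} (hDD : D ⊆ D') {i j : Fin n}
    (h : reachesIn n D i j) : reachesIn n D' i j :=
  Relation.ReflTransGen.mono (fun a b hab => hDD hab) _ _ h

lemma reachU_of_reachesIn {n D} {i j : Fin n} (h : reachesIn n D i j) : reachU n D i j :=
  Relation.ReflTransGen.mono (fun _ _ hab => Or.inl hab) _ _ h

lemma reachU_of_connected {n} {D : Finset (Fin n × Fin n)}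
    (h : (undirGraph n D).Connected) (i j : Fin n) : reachU n D i j := by
  have := ((undirGraph n D).reachable_iff_reflTransGen i j).1 (h i j)
  exact Relation.ReflTransGen.mono (fun a b hab => hab.2) _ _ this

/-- the class of `v` -/
noncomputable def rcls (n : ℕ) (D : Finset (Fin n × Fin n)) (v : Fin n) : Finset (Fin n) :=
  Finset.univ.filter (fun w => reachU n D v w)

lemma mem_rcls {n D} {v w : Fin n} : w ∈ rcls n D v ↔ reachU n D v w := by
  simp [rcls]

lemma rcls_eq_iff {n D} {v w : Fin n} : rcls n D v = rcls n D w ↔ reachU n D v w := by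
  constructor
  · intro h
    have : w ∈ rcls n D w := mem_rcls.2 reachU.refl
    rw [← h] at this
    exact mem_rcls.1 this
  · intro h
    ext u
    simp only [mem_rcls]
    exact ⟨fun h' => (h.symm).trans h', fun h' => h.trans h'⟩

lemma reachU_empty {n} {i j : Fin n} (h : reachU n ∅ i j) : i = j := by
  induction h with
  | refl => rfl
  | tail _ h ih => simp at h

/-- merge lemma -/
lemma reachU_insert {n} {D : Finset (Fin n × Fin n)} {e : Fin n × Fin n} {v w : Fin n}
    (h : reachU n (insert e D) v w) :
    reachU n D v w ∨ ((reachU n D v e.1 ∨ reachU n D v e.2) ∧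
      (reachU n D w e.1 ∨ reachU n D w e.2)) := by
  induction h with
  | refl => exact Or.inl reachU.refl
  | @tail x y _hvx hstep ih =>
    rcases hstep with hs | hs <;> rw [Finset.mem_insert] at hs
    · rcases hs with hs | hs
      · -- (x,y) = e
        have hx : x = e.1 := by rw [← hs]
        have hy : y = e.2 := by rw [← hs]
        subst hx; subst hy
        rcases ih with ih | ⟨ih1, _⟩
        · exact Or.inr ⟨Or.inl ih, Or.inr reachU.refl⟩
        · exact Or.inr ⟨ih1, Or.inr reachU.refl⟩
      · have step : reachU n D x y := Relation.ReflTransGen.single (Or.inl hs)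
        rcases ih with ih | ⟨ih1, ih2⟩
        · exact Or.inl (ih.trans step)
        · exact Or.inr ⟨ih1, ih2.imp (fun h' => step.symm.trans h') (fun h' => step.symm.trans h')⟩
    · rcases hs with hs | hs
      · -- (y,x) = e
        have hx : x = e.2 := by rw [← hs]
        have hy : y = e.1 := by rw [← hs]
        subst hx; subst hy
        rcases ih with ih | ⟨ih1, _⟩
        · exact Or.inr ⟨Or.inr ih, Or.inl reachU.refl⟩
        · exact Or.inr ⟨ih1, Or.inl reachU.refl⟩
      · have step : reachU n D x y := Relation.ReflTransGen.single (Or.inr hs)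
        rcases ih with ih | ⟨ih1, ih2⟩
        · exact Or.inl (ih.trans step)
        · exact Or.inr ⟨ih1, ih2.imp (fun h' => step.symm.trans h') (fun h' => step.symm.trans h')⟩

/-- number of classes -/
noncomputable def ccount (n : ℕ) (D : Finset (Fin n × Fin n)) : ℕ :=
  (Finset.univ.image (rcls n D)).card

lemma ccount_empty (n : ℕ) : ccount n ∅ = n := by
  have : Function.Injective (rcls n ∅) := by
    intro v w h
    exact reachU_empty (rcls_eq_iff.1 h)
  rw [ccount, Finset.card_image_of_injective _ this, Finset.card_univ, Fintype.card_fin]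

lemma ccount_insert_ge {n} (D : Finset (Fin n × Fin n)) (e : Fin n × Fin n) :
    ccount n D ≤ ccount n (insert e D) + 1 := by
  classical
  have hsub : D ⊆ insert e D := Finset.subset_insert _ _
  -- map on classes
  set θ : Finset (Fin n) → Finset (Fin n) :=
    fun C => Finset.univ.filter (fun w => ∃ u ∈ C, reachU n (insert e D) u w) with hθ
  have hθv : ∀ v, θ (rcls n D v) = rcls n (insert e D) v := by
    intro v
    ext w
    simp only [hθ, Finset.mem_filter, Finset.mem_univ, true_and, mem_rcls]
    constructor
    · rintro ⟨u, hu, huw⟩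
      exact (reachU_mono hsub hu).trans huw
    · intro h
      exact ⟨v, reachU.refl, h⟩
  have hinj : Set.InjOn θ ((Finset.univ.image (rcls n D)).erase (rcls n D e.1)) := by
    intro C1 hC1 C2 hC2 heq
    simp only [Finset.coe_erase, Set.mem_diff, Finset.coe_image, Set.mem_image] at hC1 hC2
    obtain ⟨⟨v, _, rfl⟩, hne1⟩ := hC1
    obtain ⟨⟨w, _, rfl⟩, hne2⟩ := hC2
    rw [hθv, hθv] at heq
    have hvw : reachU n (insert e D) v w := rcls_eq_iff.1 heq
    rcases reachU_insert hvw with h | ⟨h1, h2⟩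
    · exact rcls_eq_iff.2 h
    · have hv2 : reachU n D v e.2 := by
        rcases h1 with h1 | h1
        · exact absurd (rcls_eq_iff.2 h1) (by simpa using hne1)
        · exact h1
      have hw2 : reachU n D w e.2 := by
        rcases h2 with h2 | h2
        · exact absurd (rcls_eq_iff.2 h2) (by simpa using hne2)
        · exact h2
      exact rcls_eq_iff.2 (hv2.trans hw2.symm)
  have hmap : ∀ C ∈ (Finset.univ.image (rcls n D)).erase (rcls n D e.1),
      θ C ∈ Finset.univ.image (rcls n (insert e D)) := by
    intro C hC
    obtain ⟨v, _, rfl⟩ := Finset.mem_image.1 (Finset.mem_of_mem_erase hC)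
    rw [hθv]
    exact Finset.mem_image_of_mem _ (Finset.mem_univ v)
  have hcard := Finset.card_le_card_of_injOn θ hmap hinj
  have h2 : (Finset.univ.image (rcls n D)).card - 1 ≤
      ((Finset.univ.image (rcls n D)).erase (rcls n D e.1)).card :=
    Finset.pred_card_le_card_erase
  have h3 : 1 ≤ (Finset.univ.image (rcls n D)).card :=
    Finset.card_pos.2 ⟨rcls n D e.1, Finset.mem_image_of_mem _ (Finset.mem_univ _)⟩
  simp only [ccount]
  omega

lemma ccount_le (n : ℕ) (D : Finset (Fin n × Fin n)) : n ≤ D.card + ccount n D := by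
  classical
  induction D using Finset.induction_on with
  | empty => simp [ccount_empty]
  | insert e D hnotmem ih =>
    have h1 := ccount_insert_ge D e
    rw [Finset.card_insert_of_notMem hnotmem]
    omega

lemma card_ge_of_reachU_all {n : ℕ} (hn : 2 ≤ n) (D : Finset (Fin n × Fin n))
    (h : ∀ x y : Fin n, reachU n D x y) : n ≤ D.card + 1 := by
  obtain ⟨v0⟩ : Nonempty (Fin n) := ⟨⟨0, by omega⟩⟩
  have hc : ccount n D = 1 := by
    have : Finset.univ.image (rcls n D) = {rcls n D v0} := by
      apply Finset.eq_singleton_iff_nonempty_unique_mem.2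
      constructor
      · exact ⟨rcls n D v0, Finset.mem_image_of_mem _ (Finset.mem_univ _)⟩
      · intro C hC
        obtain ⟨v, _, rfl⟩ := Finset.mem_image.1 hC
        exact rcls_eq_iff.2 (h v v0)
    rw [ccount, this, Finset.card_singleton]
  have := ccount_le n D
  omega

-- chunk2 : appended after ch1 content (assumes defs from problem file present)
section chunk2

lemma mem_E0_iff {n : ℕ} {e : Fin n × Fin n} : e ∈ E0 n ↔ e.1 ≠ e.2 := by
  simp [E0]

lemma rev_rev {n : ℕ} (e : Fin n × Fin n) : rev (rev e) = e := rfl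

lemma rev_mem_E0 {n : ℕ} {e : Fin n × Fin n} (h : e ∈ E0 n) : rev e ∈ E0 n := by
  rw [mem_E0_iff] at h ⊢; exact fun hh => h hh.symm

lemma ind_eq_one_iff {n : ℕ} {S : Finset (Fin n × Fin n)} {e : Fin n × Fin n} :
    ind n S e = 1 ↔ e ∈ S := by
  simp only [ind]
  split <;> simp_all

lemma flipEdge_mem {n : ℕ} {S : Finset (Fin n × Fin n)} {e : Fin n × Fin n} (h : e ∈ S) :
    flipEdge n (ind n S) e = rev e := by
  rw [flipEdge, if_pos (ind_eq_one_iff.2 h)]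

lemma flipEdge_not_mem {n : ℕ} {S : Finset (Fin n × Fin n)} {e : Fin n × Fin n} (h : e ∉ S) :
    flipEdge n (ind n S) e = e := by
  rw [flipEdge, if_neg]
  rw [ind_eq_one_iff]
  exact h

lemma flipEdge_or {n : ℕ} (f : Fin n × Fin n → ℝ) (e : Fin n × Fin n) :
    flipEdge n f e = e ∨ flipEdge n f e = rev e := by
  rw [flipEdge]; split <;> simp

lemma eq_or_rev_of_flipEdge {n : ℕ} {f : Fin n × Fin n → ℝ} {e a : Fin n × Fin n}
    (h : flipEdge n f e = a) : e = a ∨ e = rev a := by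
  rcases flipEdge_or f e with h' | h'
  · exact Or.inl (h' ▸ h)
  · right
    rw [h'] at h
    rw [← h, rev_rev]

lemma ne_rev_self {n : ℕ} {e : Fin n × Fin n} (h : e ∈ E0 n) : e ≠ rev e := by
  rw [mem_E0_iff] at h
  intro hh
  exact h (congrArg Prod.fst hh)

/-- a directed tree contains no edge together with its reverse -/
lemma norev {n : ℕ} (hn : 2 ≤ n) {T : Finset (Fin n × Fin n)} (hT : IsDirTree n T)
    {e : Fin n × Fin n} (he : e ∈ T) : rev e ∉ T := by
  intro hrev
  obtain ⟨hE0, hcard, hconn⟩ := hT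
  have hne : e ≠ rev e := ne_rev_self (hE0 he)
  have hall : ∀ x y : Fin n, reachU n (T.erase (rev e)) x y := by
    intro x y
    refine Relation.ReflTransGen.mono ?_ _ _ (reachU_of_connected hconn x y)
    rintro a b (hab | hab)
    · by_cases hh : (a, b) = rev e
      · have hba : (b, a) = e := by rw [← rev_rev e, ← hh]; rfl
        right
        rw [Finset.mem_erase, hba]
        exact ⟨hne, he⟩
      · exact Or.inl (Finset.mem_erase.2 ⟨hh, hab⟩)
    · by_cases hh : (b, a) = rev e
      · have hba : (a, b) = e := by rw [← rev_rev e, ← hh]; rfl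
        left
        rw [Finset.mem_erase, hba]
        exact ⟨hne, he⟩
      · exact Or.inr (Finset.mem_erase.2 ⟨hh, hab⟩)
  have hbound := card_ge_of_reachU_all hn _ hall
  rw [Finset.card_erase_of_mem hrev, hcard] at hbound
  omega

lemma flip_injOn {n : ℕ} (hn : 2 ≤ n) {T : Finset (Fin n × Fin n)} (hT : IsDirTree n T)
    (f : Fin n × Fin n → ℝ) : Set.InjOn (flipEdge n f) T := by
  intro a ha b hb hab
  replace ha : a ∈ T := ha
  replace hb : b ∈ T := hb
  rcases flipEdge_or f a with h1 | h1 <;> rcases flipEdge_or f b with h2 | h2 <;>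
    rw [h1, h2] at hab
  · exact hab
  · exfalso
    have : rev a = b := by rw [hab, rev_rev]
    exact norev hn hT ha (this ▸ hb)
  · exfalso
    have : rev b = a := by rw [← hab, rev_rev]
    exact norev hn hT hb (this ▸ ha)
  · have := congrArg rev hab
    rwa [rev_rev, rev_rev] at this

lemma mem_flipSet {n : ℕ} {f : Fin n × Fin n → ℝ} {T : Finset (Fin n × Fin n)}
    {a : Fin n × Fin n} : a ∈ flipSet n f T ↔ ∃ e ∈ T, flipEdge n f e = a := by
  simp [flipSet]

lemma flipSet_or_iff {n : ℕ} (f : Fin n × Fin n → ℝ) (T : Finset (Fin n × Fin n))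
    (u v : Fin n) :
    ((u, v) ∈ flipSet n f T ∨ (v, u) ∈ flipSet n f T) ↔ ((u, v) ∈ T ∨ (v, u) ∈ T) := by
  constructor
  · rintro (h | h)
    · obtain ⟨e, he, hfe⟩ := mem_flipSet.1 h
      rcases eq_or_rev_of_flipEdge hfe with h' | h' <;> subst h'
      · exact Or.inl he
      · exact Or.inr he
    · obtain ⟨e, he, hfe⟩ := mem_flipSet.1 h
      rcases eq_or_rev_of_flipEdge hfe with h' | h' <;> subst h'
      · exact Or.inr he
      · exact Or.inl he
  · rintro (h | h)
    · rcases flipEdge_or f (u, v) with h' | h'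
      · exact Or.inl (mem_flipSet.2 ⟨(u, v), h, h'⟩)
      · exact Or.inr (mem_flipSet.2 ⟨(u, v), h, h'⟩)
    · rcases flipEdge_or f (v, u) with h' | h'
      · exact Or.inr (mem_flipSet.2 ⟨(v, u), h, h'⟩)
      · exact Or.inl (mem_flipSet.2 ⟨(v, u), h, h'⟩)

lemma undirGraph_flipSet {n : ℕ} (f : Fin n × Fin n → ℝ) (T : Finset (Fin n × Fin n)) :
    undirGraph n (flipSet n f T) = undirGraph n T := by
  ext u v
  show u ≠ v ∧ _ ↔ u ≠ v ∧ _
  rw [flipSet_or_iff]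

lemma isDirTree_flipSet {n : ℕ} (hn : 2 ≤ n) {T : Finset (Fin n × Fin n)}
    (hT : IsDirTree n T) (f : Fin n × Fin n → ℝ) : IsDirTree n (flipSet n f T) := by
  obtain ⟨hE0, hcard, hconn⟩ := hT
  refine ⟨?_, ?_, ?_⟩
  · intro a ha
    obtain ⟨e, he, hfe⟩ := mem_flipSet.1 ha
    rcases flipEdge_or f e with h' | h' <;> rw [h'] at hfe <;> subst hfe
    · exact hE0 he
    · exact rev_mem_E0 (hE0 he)
  · rw [flipSet, Finset.card_image_of_injOn (flip_injOn hn ⟨hE0, hcard, hconn⟩ f), hcard]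
  · rw [undirGraph_flipSet]
    exact hconn

end chunk2
section chunk3

lemma sum_ones_le {V : Type*} (s : Finset V) (f : V → ℕ) (h : ∀ v ∈ s, 1 ≤ f v) :
    s.card ≤ ∑ v ∈ s, f v := by
  calc s.card = ∑ _v ∈ s, 1 := by rw [Finset.sum_const, smul_eq_mul, mul_one]
  _ ≤ _ := Finset.sum_le_sum h

lemma CNT {V : Type*} [DecidableEq V] (s : Finset V) (f : V → ℕ) (x : V) (hx : x ∈ s)
    (h1 : ∀ v ∈ s, v ≠ x → 1 ≤ f v) (hs : ∑ v ∈ s, f v = s.card - 1) :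
    f x = 0 ∧ ∀ v ∈ s, v ≠ x → f v = 1 := by
  have hc1 : 1 ≤ s.card := Finset.card_pos.2 ⟨x, hx⟩
  have hsplit : f x + ∑ v ∈ s.erase x, f v = ∑ v ∈ s, f v := Finset.add_sum_erase s f hx
  have hge : (s.erase x).card ≤ ∑ v ∈ s.erase x, f v :=
    sum_ones_le _ _ (fun v hv => h1 v (Finset.mem_of_mem_erase hv) (Finset.ne_of_mem_erase hv))
  rw [Finset.card_erase_of_mem hx] at hge
  refine ⟨by omega, ?_⟩
  intro v hv hvx
  have hv' : v ∈ s.erase x := Finset.mem_erase.2 ⟨hvx, hv⟩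
  have hsplit2 : f v + ∑ w ∈ (s.erase x).erase v, f w = ∑ w ∈ s.erase x, f w :=
    Finset.add_sum_erase _ f hv'
  have hge2 : ((s.erase x).erase v).card ≤ ∑ w ∈ (s.erase x).erase v, f w :=
    sum_ones_le _ _ (fun w hw => h1 w (Finset.mem_of_mem_erase (Finset.mem_of_mem_erase hw))
      (Finset.ne_of_mem_erase (Finset.mem_of_mem_erase hw)))
  rw [Finset.card_erase_of_mem hv', Finset.card_erase_of_mem hx] at hge2
  have h1v := h1 v hv hvx
  omega

variable {n : ℕ} {r : Fin n} {A : Finset (Fin n × Fin n)}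

/-- out-degrees in an arborescence -/
lemma arb_outdeg (hn : 2 ≤ n) (hA : IsArb n r A) :
    (A.filter (fun a => a.1 = r)).card = 0 ∧
      ∀ v : Fin n, v ≠ r → (A.filter (fun a => a.1 = v)).card = 1 := by
  have hsum : ∑ v : Fin n, (A.filter (fun a => a.1 = v)).card = A.card :=
    (Finset.card_eq_sum_card_fiberwise (fun x _ => Finset.mem_univ x.1)).symm
  have hge : ∀ v : Fin n, v ≠ r → 1 ≤ (A.filter (fun a => a.1 = v)).card := by
    intro v hv
    rcases (hA.2 v).cases_head with h | ⟨c, hc, _⟩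
    · exact absurd h hv
    · exact Finset.card_pos.2 ⟨(v, c), Finset.mem_filter.2 ⟨hc, rfl⟩⟩
  have := CNT Finset.univ (fun v => (A.filter (fun a => a.1 = v)).card) r (Finset.mem_univ r)
    (fun v _ hv => hge v hv) (by
      rw [hsum, hA.1.2.1, Finset.card_univ, Fintype.card_fin])
  exact ⟨this.1, fun v hv => this.2 v (Finset.mem_univ v) hv⟩

lemma arb_not_mem_root (hn : 2 ≤ n) (hA : IsArb n r A) {w : Fin n} : (r, w) ∉ A := by
  intro h
  have := (arb_outdeg hn hA).1
  have : (r, w) ∈ A.filter (fun a => a.1 = r) := Finset.mem_filter.2 ⟨h, rfl⟩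
  simp_all [Finset.card_eq_zero]
  exact this r w h rfl

lemma arb_out_unique (hn : 2 ≤ n) (hA : IsArb n r A) {v w w' : Fin n}
    (h : (v, w) ∈ A) (h' : (v, w') ∈ A) : w = w' := by
  by_cases hv : v = r
  · subst hv; exact absurd h (arb_not_mem_root hn hA)
  · have hcard := (arb_outdeg hn hA).2 v hv
    have m1 : (v, w) ∈ A.filter (fun a => a.1 = v) := Finset.mem_filter.2 ⟨h, rfl⟩
    have m2 : (v, w') ∈ A.filter (fun a => a.1 = v) := Finset.mem_filter.2 ⟨h', rfl⟩
    have h12 := Finset.card_le_one.1 hcard.le _ m1 _ m2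
    exact congrArg Prod.snd h12

lemma arb_dag (hn : 2 ≤ n) (hA : IsArb n r A) {x y : Fin n}
    (hxy : (x, y) ∈ A) : ¬ reachesIn n A y x := by
  have key : ∀ x, reachesIn n A x r → ∀ y, (x, y) ∈ A → ¬ reachesIn n A y x := by
    intro x hx
    induction hx using Relation.ReflTransGen.head_induction_on with
    | refl => exact fun y hy _ => arb_not_mem_root hn hA hy
    | head hstep htail ih =>
      rename_i a c
      intro y hy hyx
      have hyc : y = c := arb_out_unique hn hA hy hstep
      subst hyc
      rcases hyx.cases_head with heq | ⟨w, hw, hwx⟩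
      · rw [heq] at hy
        exact (mem_E0_iff.1 (hA.1.1 hy)) rfl
      · exact ih w hw (hwx.trans (Relation.ReflTransGen.single hy))
  exact key x (hA.2 x) y hxy

/-- the directed path from `q` to the root: edges of `A` whose tail is reachable from `q` -/
noncomputable def dpath (n : ℕ) (A : Finset (Fin n × Fin n)) (q : Fin n) :
    Finset (Fin n × Fin n) :=
  A.filter (fun a => reachesIn n A q a.1)

lemma dpath_subset {q : Fin n} : dpath n A q ⊆ A := Finset.filter_subset _ _

lemma reach_dpath {q x y : Fin n} (hxy : reachesIn n A x y) (hqx : reachesIn n A q x) :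
    reachesIn n (dpath n A q) x y := by
  revert hqx
  induction hxy using Relation.ReflTransGen.head_induction_on with
  | refl => exact fun _ => Relation.ReflTransGen.refl
  | head hstep htail ih =>
    intro hq
    exact Relation.ReflTransGen.head (Finset.mem_filter.2 ⟨hstep, hq⟩) (ih (hq.tail hstep))

lemma dpath_outdeg (hn : 2 ≤ n) (hA : IsArb n r A) (q : Fin n) (v : Fin n) :
    ((dpath n A q).filter (fun a => a.1 = v)).card
      = if reachesIn n A q v ∧ v ≠ r then 1 else 0 := by
  by_cases hqv : reachesIn n A q v
  · by_cases hvr : v = r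
    · subst hvr
      rw [if_neg (by simp)]
      rw [Finset.card_eq_zero, Finset.eq_empty_iff_forall_notMem]
      rintro ⟨a1, a2⟩ ha
      simp only [Finset.mem_filter, dpath] at ha
      obtain ⟨⟨haA, _⟩, ha1⟩ := ha
      subst ha1
      exact arb_not_mem_root hn hA haA
    · rw [if_pos ⟨hqv, hvr⟩]
      have : (dpath n A q).filter (fun a => a.1 = v) = A.filter (fun a => a.1 = v) := by
        apply Finset.Subset.antisymm
        · exact Finset.filter_subset_filter _ (dpath_subset)
        · intro a ha
          obtain ⟨haA, hav⟩ := Finset.mem_filter.1 ha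
          exact Finset.mem_filter.2 ⟨Finset.mem_filter.2 ⟨haA, hav ▸ hqv⟩, hav⟩
      rw [this]
      exact (arb_outdeg hn hA).2 v hvr
  · rw [if_neg (by tauto)]
    rw [Finset.card_eq_zero, Finset.eq_empty_iff_forall_notMem]
    intro a ha
    simp only [Finset.mem_filter, dpath] at ha
    exact hqv (ha.1.2 |>.trans (by rw [ha.2]))

lemma dpath_indeg (hn : 2 ≤ n) (hA : IsArb n r A) (q : Fin n) (hqr : q ≠ r) (v : Fin n) :
    ((dpath n A q).filter (fun a => a.2 = v)).card
      = if reachesIn n A q v ∧ v ≠ q then 1 else 0 := by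
  classical
  set R : Finset (Fin n) := Finset.univ.filter (fun v => reachesIn n A q v) with hR
  have hmemR : ∀ v : Fin n, v ∈ R ↔ reachesIn n A q v := by intro v; simp [hR]
  have hqR : q ∈ R := (hmemR q).2 Relation.ReflTransGen.refl
  have hrR : r ∈ R := (hmemR r).2 (hA.2 q)
  -- tails of dpath edges are in R
  have htail : ∀ a ∈ dpath n A q, a.2 ∈ R := by
    intro a ha
    obtain ⟨haA, hq1⟩ := Finset.mem_filter.1 ha
    refine (hmemR a.2).2 (hq1.tail ?_)
    show (a.1, a.2) ∈ A
    simpa using haA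
  -- total in-degree over R
  have hsumR : ∑ v ∈ R, ((dpath n A q).filter (fun a => a.2 = v)).card = (dpath n A q).card :=
    (Finset.card_eq_sum_card_fiberwise htail).symm
  -- total out-degree
  have hsumout : (dpath n A q).card = R.card - 1 := by
    have h1 : (dpath n A q).card
        = ∑ v : Fin n, ((dpath n A q).filter (fun a => a.1 = v)).card :=
      Finset.card_eq_sum_card_fiberwise (fun x _ => Finset.mem_univ x.1)
    rw [h1]
    have h2 : ∀ v : Fin n, ((dpath n A q).filter (fun a => a.1 = v)).card
        = if v ∈ R.erase r then 1 else 0 := by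
      intro v
      rw [dpath_outdeg hn hA q v]
      congr 1
      simp only [Finset.mem_erase, hmemR, eq_iff_iff]
      tauto
    simp_rw [h2]
    rw [Finset.sum_ite_mem, Finset.univ_inter, Finset.sum_const, smul_eq_mul, mul_one,
      Finset.card_erase_of_mem hrR]
  have hge : ∀ v ∈ R, v ≠ q → 1 ≤ ((dpath n A q).filter (fun a => a.2 = v)).card := by
    intro v hv hvq
    rcases ((hmemR v).1 hv).cases_tail with heq | ⟨c, hc, hcv⟩
    · exact absurd heq hvq
    · refine Finset.card_pos.2 ⟨(c, v), Finset.mem_filter.2 ⟨Finset.mem_filter.2 ⟨hcv, hc⟩, rfl⟩⟩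
  have := CNT R (fun v => ((dpath n A q).filter (fun a => a.2 = v)).card) q hqR hge
    (by rw [hsumR, hsumout])
  by_cases hv : reachesIn n A q v
  · by_cases hvq : v = q
    · subst hvq
      rw [if_neg (by tauto)]
      exact this.1
    · rw [if_pos ⟨hv, hvq⟩]
      exact this.2 v ((hmemR v).2 hv) hvq
  · rw [if_neg (by tauto)]
    rw [Finset.card_eq_zero, Finset.eq_empty_iff_forall_notMem]
    intro a ha
    obtain ⟨had, ha2⟩ := Finset.mem_filter.1 ha
    exact hv (ha2 ▸ (hmemR a.2).1 (htail a had))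

/-- avoiding an edge, version 1 -/
lemma reachU_erase_of_not_reach_src {a : Fin n × Fin n} {x y : Fin n}
    (hxy : reachesIn n A x y) (h : ¬ reachesIn n A a.2 y) : reachU n (A.erase a) x y := by
  induction hxy using Relation.ReflTransGen.head_induction_on with
  | refl => exact reachU.refl
  | head hstep htail ih =>
    rename_i b c
    by_cases hba : (b, c) = a
    · exfalso
      have : c = a.2 := congrArg Prod.snd hba
      exact h (this ▸ htail)
    · exact Relation.ReflTransGen.head (Or.inl (Finset.mem_erase.2 ⟨hba, hstep⟩)) ih

/-- avoiding an edge, version 2 -/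
lemma reachU_erase_of_not_reach_tgt {a : Fin n × Fin n} {x y : Fin n}
    (hxy : reachesIn n A x y) (h : ¬ reachesIn n A x a.1) : reachU n (A.erase a) x y := by
  revert h
  induction hxy using Relation.ReflTransGen.head_induction_on with
  | refl => exact fun _ => reachU.refl
  | head hstep htail ih =>
    rename_i b c
    intro h
    by_cases hba : (b, c) = a
    · exfalso
      exact h ((congrArg Prod.fst hba : b = a.1) ▸ Relation.ReflTransGen.refl)
    · refine Relation.ReflTransGen.head (Or.inl (Finset.mem_erase.2 ⟨hba, hstep⟩)) (ih ?_)
      intro hc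
      exact h (hc.head hstep)

/-- removing an edge from a directed tree disconnects (undirectedly) its endpoints -/
lemma acyc (hn : 2 ≤ n) (hDT : IsDirTree n A) {a : Fin n × Fin n} (ha : a ∈ A) :
    ¬ reachU n (A.erase a) a.1 a.2 := by
  intro h
  have patch : ∀ x y : Fin n, reachU n A x y → reachU n (A.erase a) x y := by
    intro x y hxy
    induction hxy with
    | refl => exact reachU.refl
    | @tail b c _ hstep ih =>
      refine ih.trans ?_
      rcases hstep with hs | hs
      · by_cases hba : (b, c) = a
        · have h1 : b = a.1 := congrArg Prod.fst hba
          have h2 : c = a.2 := congrArg Prod.snd hba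
          rw [h1, h2]; exact h
        · exact Relation.ReflTransGen.single (Or.inl (Finset.mem_erase.2 ⟨hba, hs⟩))
      · by_cases hba : (c, b) = a
        · have h1 : c = a.1 := congrArg Prod.fst hba
          have h2 : b = a.2 := congrArg Prod.snd hba
          rw [h1, h2]; exact h.symm
        · exact Relation.ReflTransGen.single (Or.inr (Finset.mem_erase.2 ⟨hba, hs⟩))
  have hall : ∀ x y : Fin n, reachU n (A.erase a) x y := by
    intro x y
    exact patch x y (reachU_of_connected hDT.2.2 x y)
  have := card_ge_of_reachU_all hn _ hall
  rw [Finset.card_erase_of_mem ha, hDT.2.1] at this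
  omega

end chunk3
section chunk4

variable {n : ℕ}

/-- the set of tree edges on the (undirected) tree path between `s` and `t` :
those whose removal disconnects `s` from `t`. -/
noncomputable def pathP (n : ℕ) (T : Finset (Fin n × Fin n)) (s t : Fin n) :
    Finset (Fin n × Fin n) :=
  T.filter (fun e => ¬ reachU n (T.erase e) s t)

lemma pathP_symm (T : Finset (Fin n × Fin n)) (s t : Fin n) :
    pathP n T s t = pathP n T t s := by
  apply Finset.filter_congr
  intro e _
  exact ⟨fun h h' => h h'.symm, fun h h' => h h'.symm⟩

lemma pathP_subset {T : Finset (Fin n × Fin n)} {s t : Fin n} : pathP n T s t ⊆ T :=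
  Finset.filter_subset _ _

lemma reachU_erase_flip (hn : 2 ≤ n) {T : Finset (Fin n × Fin n)} (hT : IsDirTree n T)
    (f : Fin n × Fin n → ℝ) {e : Fin n × Fin n} (he : e ∈ T) {x y : Fin n} :
    reachU n (T.erase e) x y ↔
      reachU n ((flipSet n f T).erase (flipEdge n f e)) x y := by
  constructor
  · refine Relation.ReflTransGen.mono ?_ x y
    rintro a b (hs | hs) <;>
    · obtain ⟨hne, hmem⟩ := Finset.mem_erase.1 hs
      have h1 : flipEdge n f _ ∈ flipSet n f T := mem_flipSet.2 ⟨_, hmem, rfl⟩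
      have h2 : flipEdge n f _ ≠ flipEdge n f e :=
        fun hc => hne (flip_injOn hn hT f hmem he hc)
      rcases flipEdge_or f _ with h' | h' <;> rw [h'] at h1 h2 <;>
        first
          | exact Or.inl (Finset.mem_erase.2 ⟨h2, h1⟩)
          | exact Or.inr (Finset.mem_erase.2 ⟨h2, h1⟩)
  · refine Relation.ReflTransGen.mono ?_ x y
    rintro a b (hs | hs) <;>
    · obtain ⟨hne, hmem⟩ := Finset.mem_erase.1 hs
      obtain ⟨e', he', hfe'⟩ := mem_flipSet.1 hmem
      have he'e : e' ≠ e := fun hc => hne (hc ▸ hfe' ▸ rfl)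
      rcases eq_or_rev_of_flipEdge hfe' with h' | h' <;> subst h' <;>
        first
          | exact Or.inl (Finset.mem_erase.2 ⟨he'e, he'⟩)
          | exact Or.inr (Finset.mem_erase.2 ⟨he'e, he'⟩)
          | exact Or.inl (Finset.mem_erase.2 (by exact ⟨he'e, he'⟩))
          | exact Or.inr (Finset.mem_erase.2 (by exact ⟨he'e, he'⟩))

lemma claimE (hn : 2 ≤ n) {T : Finset (Fin n × Fin n)} (hT : IsDirTree n T)
    (f : Fin n × Fin n → ℝ) {r q : Fin n}
    (hA : IsArb n r (flipSet n f T)) {e : Fin n × Fin n} (he : e ∈ T) :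
    flipEdge n f e ∈ dpath n (flipSet n f T) q ↔ ¬ reachU n (T.erase e) q r := by
  set A := flipSet n f T with hAdef
  constructor
  · intro hmem hreach
    obtain ⟨haA, hqa1⟩ := Finset.mem_filter.1 hmem
    set a := flipEdge n f e with hadef
    have haA' : (a.1, a.2) ∈ A := by simpa using haA
    have hdag : ¬ reachesIn n A a.2 a.1 := by
      intro hc
      exact arb_dag hn hA haA' hc
    have hB : reachU n (A.erase a) q r := (reachU_erase_flip hn hT f he).1 hreach
    have h1 : reachU n (A.erase a) q a.1 := reachU_erase_of_not_reach_src hqa1 hdag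
    have h2 : reachU n (A.erase a) a.2 r :=
      reachU_erase_of_not_reach_tgt (hA.2 a.2) hdag
    have chain : reachU n (A.erase a) a.1 a.2 :=
      (h1.symm.trans hB).trans h2.symm
    exact acyc hn hA.1 haA chain
  · intro hne
    by_contra hmem
    apply hne
    have hqr' : reachesIn n (dpath n A q) q r := reach_dpath (hA.2 q) Relation.ReflTransGen.refl
    refine Relation.ReflTransGen.mono ?_ _ _ hqr'
    intro x y hs
    obtain ⟨hmemA, _⟩ := Finset.mem_filter.1 hs
    obtain ⟨e', he', hfe'⟩ := mem_flipSet.1 hmemA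
    have he'e : e' ≠ e := by
      intro hc
      subst hc
      exact hmem (hfe' ▸ hs)
    rcases eq_or_rev_of_flipEdge hfe' with h' | h' <;> subst h'
    · exact Or.inl (Finset.mem_erase.2 ⟨he'e, he'⟩)
    · exact Or.inr (Finset.mem_erase.2 (by exact ⟨he'e, he'⟩))

lemma dpath_eq_image (hn : 2 ≤ n) {T : Finset (Fin n × Fin n)} (hT : IsDirTree n T)
    (f : Fin n × Fin n → ℝ) {r q : Fin n}
    (hA : IsArb n r (flipSet n f T)) :
    dpath n (flipSet n f T) q = (pathP n T q r).image (flipEdge n f) := by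
  ext a
  constructor
  · intro ha
    have haA : a ∈ flipSet n f T := dpath_subset ha
    obtain ⟨e, he, hfe⟩ := mem_flipSet.1 haA
    refine Finset.mem_image.2 ⟨e, ?_, hfe⟩
    refine Finset.mem_filter.2 ⟨he, ?_⟩
    exact (claimE hn hT f hA he).1 (hfe ▸ ha)
  · intro ha
    obtain ⟨e, he, hfe⟩ := Finset.mem_image.1 ha
    obtain ⟨heT, hne⟩ := Finset.mem_filter.1 he
    exact hfe ▸ (claimE hn hT f hA heT).2 hne

end chunk4
section chunk5

lemma ind_mem {n : ℕ} {S : Finset (Fin n × Fin n)} {e : Fin n × Fin n} (h : e ∈ S) :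
    ind n S e = 1 := by simp [ind, h]

lemma ind_not_mem {n : ℕ} {S : Finset (Fin n × Fin n)} {e : Fin n × Fin n} (h : e ∉ S) :
    ind n S e = 0 := by simp [ind, h]

lemma reachesIn_rev {n : ℕ} {D : Finset (Fin n × Fin n)} {x y : Fin n}
    (h : reachesIn n D x y) : reachesIn n (D.image rev) y x := by
  induction h with
  | refl => exact Relation.ReflTransGen.refl
  | @tail b c _ hstep ih =>
    exact Relation.ReflTransGen.head (Finset.mem_image.2 ⟨(b, c), hstep, rfl⟩) ih

lemma mainLemma {n : ℕ} (hn : 2 ≤ n) {E : Finset (Fin n × Fin n)} (hE : E ⊆ E0 n)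
    (d : Fin n → ℤ) {s t : Fin n} (heta : (s, t) ∈ E) {T : Finset (Fin n × Fin n)}
    (hT : IsDirTree n T) (hTE : T ⊆ E) (hetaT : (s, t) ∉ T)
    {S : Finset (Fin n × Fin n)} (hSE : S ⊆ E)
    (hSpoly : memFlowPolytope n E d (ind n S))
    {r q : Fin n} (hrq : flipEdge n (ind n S) (s, t) = (r, q))
    (hA : IsArb n r (flipSet n (ind n S) T)) :
    symmDiff S (insert (s, t) (pathP n T s t)) ⊆ E ∧
      memFlowPolytope n E d (ind n (symmDiff S (insert (s, t) (pathP n T s t)))) ∧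
      IsArb n q (flipSet n (ind n (symmDiff S (insert (s, t) (pathP n T s t)))) T) ∧
      flipEdge n (ind n (symmDiff S (insert (s, t) (pathP n T s t)))) (s, t) = (q, r) := by
  classical
  have hst : s ≠ t := mem_E0_iff.1 (hE heta)
  have hPsymm : pathP n T s t = pathP n T q r := by
    rcases eq_or_rev_of_flipEdge hrq with h | h
    · -- (s,t) = (r,q)
      have hs' : s = r := congrArg Prod.fst h
      have ht' : t = q := congrArg Prod.snd h
      rw [hs', ht', pathP_symm]
    · -- (s,t) = rev (r,q) = (q,r)
      have hs' : s = q := congrArg Prod.fst h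
      have ht' : t = r := congrArg Prod.snd h
      rw [hs', ht']
  have hqr : q ≠ r := by
    rcases eq_or_rev_of_flipEdge hrq with h | h
    · exact fun hc => hst ((congrArg Prod.fst h).trans (hc ▸ (congrArg Prod.snd h).symm) )
    · exact fun hc => hst (((congrArg Prod.fst h).trans hc).trans (congrArg Prod.snd h).symm)
  set f := ind n S with hf
  set A := flipSet n f T with hAdef
  set P := pathP n T q r with hPdef
  set Q : Finset (Fin n × Fin n) := insert (s, t) P with hQdef
  have hQeq : insert (s, t) (pathP n T s t) = Q := by rw [hQdef, hPsymm]
  rw [hQeq]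
  set S' := symmDiff S Q with hS'def
  set f' := ind n S' with hf'
  have hmemS' : ∀ e, e ∈ S' ↔ ((e ∈ S ∧ e ∉ Q) ∨ (e ∈ Q ∧ e ∉ S)) := by
    intro e
    rw [hS'def]
    exact Finset.mem_symmDiff
  have hS'in : ∀ e, e ∈ Q → e ∈ S → e ∉ S' :=
    fun e heQ heS hc => ((hmemS' e).1 hc).elim (fun h => h.2 heQ) (fun h => h.2 heS)
  have hS'out : ∀ e, e ∉ Q → e ∉ S → e ∉ S' :=
    fun e heQ heS hc => ((hmemS' e).1 hc).elim (fun h => heS h.1) (fun h => heQ h.1)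
  have hetaQ : (s, t) ∈ Q := Finset.mem_insert_self _ _
  have hPT : P ⊆ T := pathP_subset
  have hQE : Q ⊆ E := by
    intro e he
    rcases Finset.mem_insert.1 he with h | h
    · exact h ▸ heta
    · exact hTE (hPT h)
  have hS'E : S' ⊆ E := by
    intro e he
    rcases (hmemS' e).1 he with ⟨h, _⟩ | ⟨h, _⟩
    · exact hSE h
    · exact hQE h
  -- flip toggling
  have flipQ : ∀ e ∈ Q, flipEdge n f' e = rev (flipEdge n f e) := by
    intro e heQ
    by_cases heS : e ∈ S
    · have h1 : e ∉ S' := hS'in e heQ heS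
      rw [hf', flipEdge_not_mem h1, hf, flipEdge_mem heS, rev_rev]
    · have h1 : e ∈ S' := (hmemS' e).2 (Or.inr ⟨heQ, heS⟩)
      rw [hf', flipEdge_mem h1, hf, flipEdge_not_mem heS]
  have flipNotQ : ∀ e, e ∉ Q → flipEdge n f' e = flipEdge n f e := by
    intro e heQ
    by_cases heS : e ∈ S
    · have h1 : e ∈ S' := (hmemS' e).2 (Or.inl ⟨heS, heQ⟩)
      rw [hf', flipEdge_mem h1, hf, flipEdge_mem heS]
    · have h1 : e ∉ S' := hS'out e heQ heS
      rw [hf', flipEdge_not_mem h1, hf, flipEdge_not_mem heS]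
  -- the directed path and cycle
  have hdp : dpath n A q = P.image (flipEdge n f) := dpath_eq_image hn hT f hA
  have hPd : ∀ e ∈ P, flipEdge n f e ∈ dpath n A q := by
    intro e he
    rw [hdp]
    exact Finset.mem_image_of_mem _ he
  have hrqA : (r, q) ∉ A := arb_not_mem_root hn hA
  have hrqdp : (r, q) ∉ dpath n A q := fun h => hrqA (dpath_subset h)
  have hinjQ : ∀ x ∈ Q, ∀ y ∈ Q, flipEdge n f x = flipEdge n f y → x = y := by
    intro x hx y hy hxy
    rcases Finset.mem_insert.1 hx with hx' | hx' <;> rcases Finset.mem_insert.1 hy with hy' | hy'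
    · rw [hx', hy']
    · exfalso
      subst hx'
      rw [hrq] at hxy
      exact hrqdp (hxy ▸ hPd y hy')
    · exfalso
      subst hy'
      rw [hrq] at hxy
      exact hrqdp (hxy.symm ▸ hPd x hx')
    · exact flip_injOn hn hT f (hPT hx') (hPT hy') hxy
  have hCimage : Q.image (flipEdge n f) = insert (r, q) (dpath n A q) := by
    rw [hQdef, Finset.image_insert, hrq, hdp]
  -- ### conservation
  have hcons : ∀ v : Fin n,
      (∑ i, ind n S' (v, i)) - (∑ i, ind n S' (i, v)) = (d v : ℝ) := by
    intro v
    have hS := hSpoly.2.2 v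
    set F : Fin n × Fin n → ℝ := fun e => 1 - 2 * ind n S e with hF
    have hδ : ∀ e, ind n S' e - ind n S e = if e ∈ Q then F e else 0 := by
      intro e
      by_cases heQ : e ∈ Q <;> by_cases heS : e ∈ S
      · have h1 : e ∉ S' := hS'in e heQ heS
        rw [if_pos heQ, ind_not_mem h1, ind_mem heS, hF]
        norm_num [ind_mem heS]
      · have h1 : e ∈ S' := (hmemS' e).2 (Or.inr ⟨heQ, heS⟩)
        rw [if_pos heQ, ind_mem h1, ind_not_mem heS, hF]
        norm_num [ind_not_mem heS]
      · have h1 : e ∈ S' := (hmemS' e).2 (Or.inl ⟨heS, heQ⟩)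
        rw [if_neg heQ, ind_mem h1, ind_mem heS]; ring
      · have h1 : e ∉ S' := hS'out e heQ heS
        rw [if_neg heQ, ind_not_mem h1, ind_not_mem heS]; ring
    have SUM1 : ∑ i : Fin n, (ind n S' (v, i) - ind n S (v, i))
        = ∑ e ∈ Q, (if e.1 = v then F e else 0) := by
      have h1 : ∑ i : Fin n, (ind n S' (v, i) - ind n S (v, i))
          = ∑ i : Fin n, (if (v, i) ∈ Q then F (v, i) else 0) := by
        apply Finset.sum_congr rfl
        intro i _
        exact hδ (v, i)
      rw [h1, ← Finset.sum_filter, ← Finset.sum_filter]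
      refine Finset.sum_nbij' (fun i => (v, i)) (fun e => e.2) ?_ ?_ ?_ ?_ ?_
      · intro i hi
        refine Finset.mem_filter.2 ⟨(Finset.mem_filter.1 hi).2, rfl⟩
      · intro e he
        obtain ⟨heQ, he1⟩ := Finset.mem_filter.1 he
        refine Finset.mem_filter.2 ⟨Finset.mem_univ _, ?_⟩
        have : e = (v, e.2) := by
          rw [← he1]
        rwa [← this]
      · intro i _; rfl
      · intro e he
        obtain ⟨_, he1⟩ := Finset.mem_filter.1 he
        rw [← he1]
      · intro i _; rfl
    have SUM2 : ∑ i : Fin n, (ind n S' (i, v) - ind n S (i, v))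
        = ∑ e ∈ Q, (if e.2 = v then F e else 0) := by
      have h1 : ∑ i : Fin n, (ind n S' (i, v) - ind n S (i, v))
          = ∑ i : Fin n, (if (i, v) ∈ Q then F (i, v) else 0) := by
        apply Finset.sum_congr rfl
        intro i _
        exact hδ (i, v)
      rw [h1, ← Finset.sum_filter, ← Finset.sum_filter]
      refine Finset.sum_nbij' (fun i => (i, v)) (fun e => e.1) ?_ ?_ ?_ ?_ ?_
      · intro i hi
        refine Finset.mem_filter.2 ⟨(Finset.mem_filter.1 hi).2, rfl⟩
      · intro e he
        obtain ⟨heQ, he1⟩ := Finset.mem_filter.1 he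
        refine Finset.mem_filter.2 ⟨Finset.mem_univ _, ?_⟩
        have : e = (e.1, v) := by
          rw [← he1]
        rwa [← this]
      · intro i _; rfl
      · intro e he
        obtain ⟨_, he1⟩ := Finset.mem_filter.1 he
        rw [← he1]
      · intro i _; rfl
    have REI : ∑ e ∈ Q, ((if e.1 = v then F e else 0) - (if e.2 = v then F e else 0))
        = ∑ a ∈ Q.image (flipEdge n f),
            ((if a.1 = v then (1 : ℝ) else 0) - (if a.2 = v then (1 : ℝ) else 0)) := by
      rw [Finset.sum_image hinjQ]
      apply Finset.sum_congr rfl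
      intro e heQ
      by_cases heS : e ∈ S
      · rw [hf, flipEdge_mem heS]
        simp only [hF, ind_mem heS]
        show (if e.1 = v then (1 - 2 * 1 : ℝ) else 0) - (if e.2 = v then (1 - 2*1 : ℝ) else 0)
          = (if e.2 = v then (1:ℝ) else 0) - (if e.1 = v then (1:ℝ) else 0)
        by_cases h1 : e.1 = v <;> by_cases h2 : e.2 = v <;> simp [h1, h2] <;> ring
      · rw [hf, flipEdge_not_mem heS]
        simp only [hF, ind_not_mem heS]
        norm_num
    have CSUM : ∑ a ∈ Q.image (flipEdge n f),
        ((if a.1 = v then (1 : ℝ) else 0) - (if a.2 = v then (1 : ℝ) else 0)) = 0 := by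
      rw [hCimage, Finset.sum_insert hrqdp]
      have hout : ∑ a ∈ dpath n A q, (if a.1 = v then (1 : ℝ) else 0)
          = ((dpath n A q).filter (fun a => a.1 = v)).card := by
        rw [Finset.sum_boole]
      have hin : ∑ a ∈ dpath n A q, (if a.2 = v then (1 : ℝ) else 0)
          = ((dpath n A q).filter (fun a => a.2 = v)).card := by
        rw [Finset.sum_boole]
      rw [Finset.sum_sub_distrib, hout, hin, dpath_outdeg hn hA q v, dpath_indeg hn hA q hqr v]
      have hqq : reachesIn n A q q := Relation.ReflTransGen.refl
      have hqrr : reachesIn n A q r := hA.2 q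
      by_cases h1 : reachesIn n A q v
      · by_cases h2 : v = r
        · rw [if_pos h2.symm, if_neg (fun hc : q = v => hqr (hc.trans h2)),
            if_neg (fun hc : _ ∧ v ≠ r => hc.2 h2),
            if_pos ⟨h1, fun hc : v = q => hqr (hc.symm.trans h2)⟩]
          norm_num
        · by_cases h3 : v = q
          · rw [if_neg (fun hc : r = v => hqr (h3.symm.trans hc.symm)), if_pos h3.symm,
              if_pos ⟨h1, h2⟩, if_neg (fun hc : _ ∧ v ≠ q => hc.2 h3)]
            norm_num
          · rw [if_neg (fun hc : r = v => h2 hc.symm), if_neg (fun hc : q = v => h3 hc.symm),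
              if_pos ⟨h1, h2⟩, if_pos ⟨h1, h3⟩]
            norm_num
      · have h2 : v ≠ r := fun hc => h1 (hc ▸ hqrr)
        have h3 : v ≠ q := fun hc => h1 (hc ▸ hqq)
        rw [if_neg (fun hc : r = v => h2 hc.symm), if_neg (fun hc : q = v => h3 hc.symm),
          if_neg (fun hc : reachesIn n A q v ∧ v ≠ r => h1 hc.1),
          if_neg (fun hc : reachesIn n A q v ∧ v ≠ q => h1 hc.1)]
        norm_num
    have key : ∑ i : Fin n, (ind n S' (v, i) - ind n S (v, i))
        - ∑ i : Fin n, (ind n S' (i, v) - ind n S (i, v)) = 0 := by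
      rw [SUM1, SUM2, ← Finset.sum_sub_distrib, REI, CSUM]
    rw [Finset.sum_sub_distrib, Finset.sum_sub_distrib] at key
    linarith [hS]
  -- ### arborescence
  have revdp : ∀ a ∈ dpath n A q, rev a ∈ flipSet n f' T := by
    intro a ha
    rw [hdp] at ha
    obtain ⟨e, he, hfe⟩ := Finset.mem_image.1 ha
    have : flipEdge n f' e = rev a := by
      rw [flipQ e (Finset.mem_insert_of_mem he), hfe]
    exact mem_flipSet.2 ⟨e, hPT he, this⟩
  have stepA : ∀ a ∈ A, a ∈ dpath n A q ∨ a ∈ flipSet n f' T := by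
    intro a ha
    obtain ⟨e, he, hfe⟩ := mem_flipSet.1 ha
    by_cases heP : e ∈ P
    · exact Or.inl (hfe ▸ hPd e heP)
    · have heQ : e ∉ Q := by
        intro hc
        rcases Finset.mem_insert.1 hc with hc' | hc'
        · exact hetaT (hc' ▸ he)
        · exact heP hc'
      right
      rw [← hfe, ← flipNotQ e heQ]
      exact mem_flipSet.2 ⟨e, he, rfl⟩
  have reach1 : reachesIn n (flipSet n f' T) r q := by
    have h1 : reachesIn n (dpath n A q) q r := reach_dpath (hA.2 q) Relation.ReflTransGen.refl
    have h2 := reachesIn_rev h1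
    refine reachesIn_mono ?_ h2
    intro a ha
    obtain ⟨b, hb, hba⟩ := Finset.mem_image.1 ha
    exact hba ▸ revdp b hb
  have hreachall : ∀ v : Fin n, reachesIn n (flipSet n f' T) v q := by
    intro v
    have hv := hA.2 v
    induction hv using Relation.ReflTransGen.head_induction_on with
    | refl => exact reach1
    | head hstep htail ih =>
      rename_i b c
      rcases stepA (b, c) hstep with hdp' | hA'
      · have hqb : reachesIn n A q b := (Finset.mem_filter.1 hdp').2
        have h1 : reachesIn n (dpath n A q) q b := reach_dpath hqb Relation.ReflTransGen.refl
        have h2 := reachesIn_rev h1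
        refine reachesIn_mono ?_ h2
        intro a ha
        obtain ⟨x, hx, hxa⟩ := Finset.mem_image.1 ha
        exact hxa ▸ revdp x hx
      · exact Relation.ReflTransGen.head hA' ih
  have hflipeta : flipEdge n f' (s, t) = (q, r) := by
    rw [flipQ (s, t) hetaQ, hrq]
    rfl
  refine ⟨hS'E, ⟨?_, ?_, hcons⟩, ⟨isDirTree_flipSet hn hT f', hreachall⟩, hflipeta⟩
  · intro e he
    exact ind_not_mem (fun hc => he (hS'E hc))
  · intro e _
    have hv : ind n S' e = 0 ∨ ind n S' e = 1 := by
      by_cases h : e ∈ S'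
      · exact Or.inr (ind_mem h)
      · exact Or.inl (ind_not_mem h)
    rcases hv with h | h <;> rw [show f' e = ind n S' e from rfl, h] <;> norm_num

end chunk5

/-- bijection between `F_s(T)` and `F_t(T)` preserving all
coordinates outside `T ∪ {η}`. -/
theorem bijection_Fs_Ft (n : ℕ) (hn : 2 ≤ n)
    (E : Finset (Fin n × Fin n)) (hE : E ⊆ E0 n) (d : Fin n → ℤ)
    (s t : Fin n) (heta : (s, t) ∈ E)
    (T : Finset (Fin n × Fin n)) (hT : IsDirTree n T) (hTE : T ⊆ E) :
    ∃ π : Finset (Fin n × Fin n) → Finset (Fin n × Fin n),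
      Set.BijOn π
        (((flowVertices n E d).filter
            (fun S => IsArb n s (flipSet n (ind n S) T) ∧ (s, t) ∉ S) :
          Finset (Finset (Fin n × Fin n))) : Set (Finset (Fin n × Fin n)))
        (((flowVertices n E d).filter
            (fun S => IsArb n t (flipSet n (ind n S) T) ∧ (s, t) ∈ S) :
          Finset (Finset (Fin n × Fin n))) : Set (Finset (Fin n × Fin n))) ∧
      ∀ S ∈ (flowVertices n E d).filter
          (fun S => IsArb n s (flipSet n (ind n S) T) ∧ (s, t) ∉ S),
        ∀ e ∈ E, e ∉ T → e ≠ (s, t) → (e ∈ S ↔ e ∈ π S) := by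
  classical
  have hst : s ≠ t := mem_E0_iff.1 (hE heta)
  by_cases hetaT : (s, t) ∈ T
  · -- degenerate case: both sides are empty
    have hdom : (flowVertices n E d).filter
        (fun S => IsArb n s (flipSet n (ind n S) T) ∧ (s, t) ∉ S) = ∅ := by
      apply Finset.eq_empty_of_forall_notMem
      intro S hS
      obtain ⟨_, hArb, hno⟩ := Finset.mem_filter.1 hS
      have : (s, t) ∈ flipSet n (ind n S) T :=
        mem_flipSet.2 ⟨(s, t), hetaT, flipEdge_not_mem hno⟩
      exact arb_not_mem_root hn hArb this
    have hcod : (flowVertices n E d).filter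
        (fun S => IsArb n t (flipSet n (ind n S) T) ∧ (s, t) ∈ S) = ∅ := by
      apply Finset.eq_empty_of_forall_notMem
      intro S hS
      obtain ⟨_, hArb, hyes⟩ := Finset.mem_filter.1 hS
      have : (t, s) ∈ flipSet n (ind n S) T :=
        mem_flipSet.2 ⟨(s, t), hetaT, flipEdge_mem hyes⟩
      exact arb_not_mem_root hn hArb this
    refine ⟨id, ?_, ?_⟩
    · rw [hdom, hcod, Finset.coe_empty]
      exact Set.bijOn_empty id
    · intro S hS
      rw [hdom] at hS
      exact absurd hS (Finset.notMem_empty S)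
  · -- main case
    set Q : Finset (Fin n × Fin n) := insert (s, t) (pathP n T s t) with hQdef
    refine ⟨fun S => symmDiff S Q, ?_, ?_⟩
    · have hmt1 : ∀ S ∈ (flowVertices n E d).filter
          (fun S => IsArb n s (flipSet n (ind n S) T) ∧ (s, t) ∉ S),
          symmDiff S Q ∈ (flowVertices n E d).filter
            (fun S => IsArb n t (flipSet n (ind n S) T) ∧ (s, t) ∈ S) := by
        intro S hS
        obtain ⟨hfv, hArb, hno⟩ := Finset.mem_filter.1 hS
        obtain ⟨_, hSE, hSpoly⟩ := Finset.mem_filter.1 hfv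
        obtain ⟨hsub, hpoly, hArb', hflip⟩ := mainLemma hn hE d heta hT hTE hetaT hSE hSpoly
          (flipEdge_not_mem hno) hArb
        refine Finset.mem_filter.2 ⟨Finset.mem_filter.2 ⟨Finset.mem_univ _, hsub, hpoly⟩,
          hArb', ?_⟩
        by_contra hc
        rw [flipEdge_not_mem hc] at hflip
        exact hst (congrArg Prod.fst hflip)
      have hmt2 : ∀ S ∈ (flowVertices n E d).filter
          (fun S => IsArb n t (flipSet n (ind n S) T) ∧ (s, t) ∈ S),
          symmDiff S Q ∈ (flowVertices n E d).filter
            (fun S => IsArb n s (flipSet n (ind n S) T) ∧ (s, t) ∉ S) := by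
        intro S hS
        obtain ⟨hfv, hArb, hyes⟩ := Finset.mem_filter.1 hS
        obtain ⟨_, hSE, hSpoly⟩ := Finset.mem_filter.1 hfv
        obtain ⟨hsub, hpoly, hArb', hflip⟩ := mainLemma hn hE d heta hT hTE hetaT hSE hSpoly
          (flipEdge_mem hyes) hArb
        refine Finset.mem_filter.2 ⟨Finset.mem_filter.2 ⟨Finset.mem_univ _, hsub, hpoly⟩,
          hArb', ?_⟩
        intro hc
        rw [flipEdge_mem hc] at hflip
        exact hst (congrArg Prod.snd hflip)
      have hinv : ∀ S : Finset (Fin n × Fin n), symmDiff (symmDiff S Q) Q = S := by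
        intro S
        exact symmDiff_symmDiff_cancel_right Q S
      refine Set.InvOn.bijOn (f' := fun S => symmDiff S Q) ⟨?_, ?_⟩ ?_ ?_
      · intro S hS
        exact hinv S
      · intro S hS
        exact hinv S
      · intro S hS
        exact hmt1 S hS
      · intro S hS
        exact hmt2 S hS
    · intro S hS e heE heT hne
      have heQ : e ∉ Q := by
        intro hc
        rcases Finset.mem_insert.1 hc with hc' | hc'
        · exact hne hc'
        · exact heT (pathP_subset hc')
      rw [Finset.mem_symmDiff]
      tauto
end

section
/- Let P be a flow-based polytope whose edge set E is connected when viewed as a set of undirected edges, and suppose there exists x ∈ P with x_e ∈ (0,1) for all e ∈ E. Then for EVERY root r ∈ [n] there exist a vertex f of P and a directed tree T with all edges in E such that Flip_f(T) is an arborescence rooted at r. -/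
open Finset

open scoped Classical

lemma sum_out_eq (n : ℕ) (F : Finset (Fin n × Fin n)) (σ : Fin n × Fin n → ℝ)
    (hsupp : ∀ e, e ∉ F → σ e = 0) (v : Fin n) :
    (∑ i, σ (v, i)) = ∑ e ∈ F, (if e.1 = v then σ e else 0) := by
  have h1 : ∀ i : Fin n, σ (v, i) = ∑ e ∈ F, if e = (v, i) then σ e else 0 := by
    intro i
    rw [Finset.sum_ite_eq']
    by_cases h : (v, i) ∈ F
    · simp [h]
    · simp [h, hsupp _ h]
  rw [Finset.sum_congr rfl (fun i _ => h1 i), Finset.sum_comm]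
  refine Finset.sum_congr rfl (fun e he => ?_)
  by_cases h : e.1 = v
  · rw [if_pos h]
    have : ∀ i : Fin n, (e = (v, i)) = (i = e.2) := by
      intro i
      ext
      constructor
      · rintro rfl; rfl
      · rintro rfl; rw [← h]
    simp only [this]
    rw [Finset.sum_ite_eq' Finset.univ e.2 (fun _ => σ e)]
    simp
  · rw [if_neg h]
    apply Finset.sum_eq_zero
    intro i _
    rw [if_neg]
    rintro rfl
    exact h rfl

lemma sum_in_eq (n : ℕ) (F : Finset (Fin n × Fin n)) (σ : Fin n × Fin n → ℝ)
    (hsupp : ∀ e, e ∉ F → σ e = 0) (v : Fin n) :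
    (∑ i, σ (i, v)) = ∑ e ∈ F, (if e.2 = v then σ e else 0) := by
  have h1 : ∀ i : Fin n, σ (i, v) = ∑ e ∈ F, if e = (i, v) then σ e else 0 := by
    intro i
    rw [Finset.sum_ite_eq']
    by_cases h : (i, v) ∈ F
    · simp [h]
    · simp [h, hsupp _ h]
  rw [Finset.sum_congr rfl (fun i _ => h1 i), Finset.sum_comm]
  refine Finset.sum_congr rfl (fun e he => ?_)
  by_cases h : e.2 = v
  · rw [if_pos h]
    have : ∀ i : Fin n, (e = (i, v)) = (i = e.1) := by
      intro i
      ext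
      constructor
      · rintro rfl; rfl
      · rintro rfl; rw [← h]
    simp only [this]
    rw [Finset.sum_ite_eq' Finset.univ e.1 (fun _ => σ e)]
    simp
  · rw [if_neg h]
    apply Finset.sum_eq_zero
    intro i _
    rw [if_neg]
    rintro rfl
    exact h rfl

lemma exists_circulation (n : ℕ) (F : Finset (Fin n × Fin n)) (hF0 : F ⊆ E0 n)
    (hne : F.Nonempty)
    (hdeg : ∀ v : Fin n, ∀ e ∈ F, (e.1 = v ∨ e.2 = v) →
      ∃ e' ∈ F, e' ≠ e ∧ (e'.1 = v ∨ e'.2 = v)) :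
    ∃ σ : Fin n × Fin n → ℝ, σ ≠ 0 ∧ (∀ e, e ∉ F → σ e = 0) ∧
      ∀ v : Fin n, (∑ i, σ (v, i)) - (∑ i, σ (i, v)) = 0 := by
  by_contra hcon
  push_neg at hcon
  set W : Finset (Fin n) := Finset.univ.filter (fun v => ∃ e ∈ F, e.1 = v ∨ e.2 = v) with hW
  set vecs : F → (Fin n → ℝ) :=
    fun e v => (if v = (e : Fin n × Fin n).1 then (1:ℝ) else 0) -
      (if v = (e : Fin n × Fin n).2 then (1:ℝ) else 0) with hvecs
  -- linear independence
  have hli : LinearIndependent ℝ vecs := by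
    rw [Fintype.linearIndependent_iff]
    intro g hg
    by_contra hgz
    push_neg at hgz
    obtain ⟨i0, hi0⟩ := hgz
    set σ : Fin n × Fin n → ℝ := fun e => if h : e ∈ F then g ⟨e, h⟩ else 0 with hσ
    have hsupp : ∀ e, e ∉ F → σ e = 0 := by intro e he; simp [hσ, he]
    have hσne : σ ≠ 0 := by
      intro h
      apply hi0
      have := congrFun h (i0 : Fin n × Fin n)
      simpa [hσ, i0.2] using this
    have hcons : ∀ v : Fin n, (∑ i, σ (v, i)) - (∑ i, σ (i, v)) = 0 := by
      intro v
      have hgv := congrFun hg v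
      simp only [Finset.sum_apply, Pi.smul_apply, Pi.zero_apply, smul_eq_mul, hvecs] at hgv
      rw [sum_out_eq n F σ hsupp v, sum_in_eq n F σ hsupp v, ← Finset.sum_sub_distrib]
      have heq : (∑ e ∈ F, ((if e.1 = v then σ e else 0) - (if e.2 = v then σ e else 0)))
          = ∑ x : F, g x * ((if v = (x : Fin n × Fin n).1 then (1:ℝ) else 0) -
              (if v = (x : Fin n × Fin n).2 then 1 else 0)) := by
        rw [← Finset.sum_coe_sort F
          (fun e => (if e.1 = v then σ e else 0) - (if e.2 = v then σ e else 0))]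
        refine Finset.sum_congr rfl (fun e _ => ?_)
        have hσe : σ (e : Fin n × Fin n) = g e := by simp [hσ, e.2]
        have c1 : (if (e : Fin n × Fin n).1 = v then σ (e : Fin n × Fin n) else 0)
            = if v = (e : Fin n × Fin n).1 then g e else 0 := by
          by_cases h : v = (e : Fin n × Fin n).1
          · rw [if_pos h.symm, if_pos h, hσe]
          · rw [if_neg (fun hh => h hh.symm), if_neg h]
        have c2 : (if (e : Fin n × Fin n).2 = v then σ (e : Fin n × Fin n) else 0)
            = if v = (e : Fin n × Fin n).2 then g e else 0 := by
          by_cases h : v = (e : Fin n × Fin n).2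
          · rw [if_pos h.symm, if_pos h, hσe]
          · rw [if_neg (fun hh => h hh.symm), if_neg h]
        rw [c1, c2]
        by_cases h1 : v = (e : Fin n × Fin n).1 <;> by_cases h2 : v = (e : Fin n × Fin n).2 <;>
          simp [h1, h2, mul_sub, mul_ite, mul_one, mul_zero]
      rw [heq, hgv]
    obtain ⟨v, hv⟩ := hcon σ hσne hsupp
    exact hv (hcons v)
  obtain ⟨e0, he0⟩ := hne
  have hw0 : e0.1 ∈ W := by
    rw [hW, Finset.mem_filter]
    exact ⟨Finset.mem_univ _, ⟨e0, he0, Or.inl rfl⟩⟩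
  set U : Submodule ℝ (Fin n → ℝ) :=
    { carrier := {y | (∑ v, y v) = 0 ∧ ∀ v, v ∉ W → y v = 0}
      add_mem' := by
        rintro a b ⟨ha1, ha2⟩ ⟨hb1, hb2⟩
        exact ⟨by simp [Finset.sum_add_distrib, ha1, hb1],
          fun v hv => by simp [ha2 v hv, hb2 v hv]⟩
      zero_mem' := ⟨by simp, fun v _ => rfl⟩
      smul_mem' := by
        rintro c a ⟨ha1, ha2⟩
        refine ⟨?_, fun v hv => by simp [ha2 v hv]⟩
        simp only [Pi.smul_apply, smul_eq_mul, ← Finset.mul_sum, ha1, mul_zero] } with hU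
  have hrange : ∀ e : F, vecs e ∈ U := by
    intro e
    constructor
    · simp only [hvecs, Finset.sum_sub_distrib]
      rw [Finset.sum_ite_eq' Finset.univ (e : Fin n × Fin n).1 (fun _ => (1:ℝ)),
        Finset.sum_ite_eq' Finset.univ (e : Fin n × Fin n).2 (fun _ => (1:ℝ))]
      simp
    · intro v hv
      have hv1 : v ≠ (e : Fin n × Fin n).1 := by
        rintro rfl
        exact hv (by rw [hW, Finset.mem_filter]; exact ⟨Finset.mem_univ _, ⟨e, e.2, Or.inl rfl⟩⟩)
      have hv2 : v ≠ (e : Fin n × Fin n).2 := by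
        rintro rfl
        exact hv (by rw [hW, Finset.mem_filter]; exact ⟨Finset.mem_univ _, ⟨e, e.2, Or.inr rfl⟩⟩)
      simp [hvecs, hv1, hv2]
  set W' := W.erase e0.1 with hW'
  set π : (Fin n → ℝ) →ₗ[ℝ] (W' → ℝ) := LinearMap.funLeft ℝ ℝ (fun v : W' => (v : Fin n))
    with hπ
  have hdisj : Disjoint (Submodule.span ℝ (Set.range vecs)) (LinearMap.ker π) := by
    rw [Submodule.disjoint_def]
    intro y hy hyker
    have hyU : y ∈ U := by
      have hle : Submodule.span ℝ (Set.range vecs) ≤ U :=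
        Submodule.span_le.2 (by rintro _ ⟨e, rfl⟩; exact hrange e)
      exact hle hy
    have hker : ∀ v : W', y ↑v = 0 := fun v => congrFun (LinearMap.mem_ker.1 hyker) v
    have hzero : ∀ v : Fin n, v ≠ e0.1 → y v = 0 := by
      intro v hv
      by_cases hvW : v ∈ W
      · exact hker ⟨v, Finset.mem_erase.2 ⟨hv, hvW⟩⟩
      · exact hyU.2 v hvW
    have hsum := hyU.1
    rw [Finset.sum_eq_single e0.1 (fun b _ hb => hzero b hb) (by simp)] at hsum
    funext v
    by_cases hv : v = e0.1
    · rw [hv]; exact hsum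
    · exact hzero v hv
  have hli2 : LinearIndependent ℝ (π ∘ vecs) := hli.map hdisj
  have hcard := hli2.fintype_card_le_finrank
  rw [Module.finrank_fintype_fun_eq_card, Fintype.card_coe, Fintype.card_coe] at hcard
  have hcard2 : F.card ≤ W.card - 1 := by
    rwa [hW', Finset.card_erase_of_mem hw0] at hcard
  -- handshake
  have hdegW : ∀ v ∈ W, 2 ≤ (F.filter (fun e => e.1 = v ∨ e.2 = v)).card := by
    intro v hv
    rw [hW, Finset.mem_filter] at hv
    obtain ⟨-, e, he, hinc⟩ := hv
    obtain ⟨e', he', hne', hinc'⟩ := hdeg v e he hinc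
    rw [Nat.succ_le_iff, Finset.one_lt_card]
    exact ⟨e, Finset.mem_filter.2 ⟨he, hinc⟩, e', Finset.mem_filter.2 ⟨he', hinc'⟩,
      fun h => hne' h.symm⟩
  have hsum : ∑ v : Fin n, (F.filter (fun e => e.1 = v ∨ e.2 = v)).card = 2 * F.card := by
    have : ∀ v : Fin n, (F.filter (fun e => e.1 = v ∨ e.2 = v)).card
        = ∑ e ∈ F, if e.1 = v ∨ e.2 = v then 1 else 0 := fun v => Finset.card_filter _ _
    rw [Finset.sum_congr rfl (fun v _ => this v), Finset.sum_comm]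
    have h2 : ∀ e ∈ F, (∑ v : Fin n, if e.1 = v ∨ e.2 = v then 1 else 0) = 2 := by
      intro e he
      have hne12 : e.1 ≠ e.2 := by
        have := hF0 he
        simp only [E0, Finset.mem_filter] at this
        exact this.2
      have hfe : Finset.univ.filter (fun v => e.1 = v ∨ e.2 = v) = {e.1, e.2} := by
        ext v
        simp [eq_comm]
      rw [← Finset.card_filter, hfe, Finset.card_insert_of_notMem (by simp [hne12]),
        Finset.card_singleton]
    rw [Finset.sum_congr rfl h2, Finset.sum_const, smul_eq_mul, mul_comm]
  have hWF : 2 * W.card ≤ 2 * F.card := by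
    rw [← hsum]
    calc 2 * W.card = ∑ _v ∈ W, 2 := by rw [Finset.sum_const, smul_eq_mul, mul_comm]
    _ ≤ ∑ v ∈ W, (F.filter (fun e => e.1 = v ∨ e.2 = v)).card := Finset.sum_le_sum hdegW
    _ ≤ ∑ v : Fin n, (F.filter (fun e => e.1 = v ∨ e.2 = v)).card :=
        Finset.sum_le_sum_of_subset (Finset.subset_univ W)
  have hW1 : 1 ≤ W.card := Finset.card_pos.2 ⟨e0.1, hw0⟩
  omega



lemma int_sum {α : Type*} (s : Finset α) (g : α → ℝ)
    (h : ∀ a ∈ s, ∃ m : ℤ, g a = m) : ∃ m : ℤ, ∑ a ∈ s, g a = m := by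
  classical
  induction s using Finset.induction_on with
  | empty => exact ⟨0, by simp⟩
  | insert a s hni ih =>
    obtain ⟨m1, hm1⟩ := h a (Finset.mem_insert_self a s)
    obtain ⟨m2, hm2⟩ := ih (fun b hb => h b (Finset.mem_insert_of_mem hb))
    exact ⟨m1 + m2, by rw [Finset.sum_insert hni, hm1, hm2]; push_cast; ring⟩

lemma exists_vertex (n : ℕ) (E : Finset (Fin n × Fin n)) (hE : E ⊆ E0 n) (d : Fin n → ℤ) :
    ∀ k : ℕ, ∀ x : Fin n × Fin n → ℝ, memFlowPolytope n E d x →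
      (E.filter (fun e => x e ≠ 0 ∧ x e ≠ 1)).card = k →
      ∃ f, IsVertex n E d f := by
  intro k
  induction k using Nat.strong_induction_on with
  | _ k ih =>
  intro x hx hk
  by_cases hF : (E.filter (fun e => x e ≠ 0 ∧ x e ≠ 1)) = ∅
  · refine ⟨x, hx, ?_⟩
    intro e he
    by_contra hcon
    push_neg at hcon
    have hmem : e ∈ E.filter (fun e => x e ≠ 0 ∧ x e ≠ 1) :=
      Finset.mem_filter.2 ⟨he, hcon⟩
    rw [hF] at hmem
    exact absurd hmem (Finset.notMem_empty e)
  · set F := E.filter (fun e => x e ≠ 0 ∧ x e ≠ 1) with hFdef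
    have hFne : F.Nonempty := Finset.nonempty_of_ne_empty hF
    have hFE : F ⊆ E := Finset.filter_subset _ _
    have hfrac : ∀ e ∈ F, 0 < x e ∧ x e < 1 := by
      intro e he
      rw [hFdef, Finset.mem_filter] at he
      obtain ⟨heE, h0, h1⟩ := he
      obtain ⟨hl, hr⟩ := hx.2.1 e heE
      exact ⟨lt_of_le_of_ne hl (Ne.symm h0), lt_of_le_of_ne hr h1⟩
    -- degree ≥ 2 on touched vertices
    have hdeg : ∀ v : Fin n, ∀ e ∈ F, (e.1 = v ∨ e.2 = v) →
        ∃ e' ∈ F, e' ≠ e ∧ (e'.1 = v ∨ e'.2 = v) := by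
      intro v e he hinc
      by_contra hno
      push_neg at hno
      have hint : ∀ e' : Fin n × Fin n, e' ≠ e → (e'.1 = v ∨ e'.2 = v) →
          ∃ m : ℤ, x e' = m := by
        intro e' hne' hinc'
        by_cases heE : e' ∈ E
        · by_cases heF : e' ∈ F
          · rcases hinc' with h | h
            · exact absurd h (hno e' heF hne').1
            · exact absurd h (hno e' heF hne').2
          · rw [hFdef, Finset.mem_filter] at heF
            push_neg at heF
            by_cases h0 : x e' = 0
            · exact ⟨0, by simp [h0]⟩
            · exact ⟨1, by simp [heF heE h0]⟩
        · exact ⟨0, by simp [hx.1 e' heE]⟩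
      have hcons := hx.2.2 v
      have heE : e ∈ E := hFE he
      have hee : e.1 ≠ e.2 := by
        have := hE heE
        simp only [E0, Finset.mem_filter] at this
        exact this.2
      obtain ⟨hxl, hxr⟩ := hfrac e he
      rcases hinc with h1 | h2
      · -- e = (v, e.2)
        have hev : (v, e.2) = e := by rw [← h1]
        have hm1 : ∃ m : ℤ, ∑ i ∈ Finset.univ.erase e.2, x (v, i) = m := by
          apply int_sum
          intro i hi
          refine hint (v, i) ?_ (Or.inl rfl)
          intro hc
          exact (Finset.mem_erase.1 hi).1 (congrArg Prod.snd hc)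
        have hm2 : ∃ m : ℤ, ∑ i, x (i, v) = m := by
          apply int_sum
          intro i _
          refine hint (i, v) ?_ (Or.inr rfl)
          intro hc
          exact hee (h1.trans (congrArg Prod.snd hc))
        obtain ⟨m1, hm1⟩ := hm1
        obtain ⟨m2, hm2⟩ := hm2
        have hsplit : (∑ i, x (v, i)) = x (v, e.2) + ∑ i ∈ Finset.univ.erase e.2, x (v, i) :=
          (Finset.add_sum_erase Finset.univ _ (Finset.mem_univ e.2)).symm
        rw [hev] at hsplit
        rw [hsplit, hm1, hm2] at hcons
        have hxe : x e = ((d v - m1 + m2 : ℤ) : ℝ) := by push_cast; linarith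
        rw [hxe] at hxl hxr
        have h0' : (0 : ℤ) < d v - m1 + m2 := by exact_mod_cast hxl
        have h1' : (d v - m1 + m2 : ℤ) < 1 := by exact_mod_cast hxr
        omega
      · -- e = (e.1, v)
        have hev : (e.1, v) = e := by rw [← h2]
        have hm1 : ∃ m : ℤ, ∑ i ∈ Finset.univ.erase e.1, x (i, v) = m := by
          apply int_sum
          intro i hi
          refine hint (i, v) ?_ (Or.inr rfl)
          intro hc
          exact (Finset.mem_erase.1 hi).1 (congrArg Prod.fst hc)
        have hm2 : ∃ m : ℤ, ∑ i, x (v, i) = m := by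
          apply int_sum
          intro i _
          refine hint (v, i) ?_ (Or.inl rfl)
          intro hc
          exact hee ((congrArg Prod.fst hc).symm.trans h2.symm)
        obtain ⟨m1, hm1⟩ := hm1
        obtain ⟨m2, hm2⟩ := hm2
        have hsplit : (∑ i, x (i, v)) = x (e.1, v) + ∑ i ∈ Finset.univ.erase e.1, x (i, v) :=
          (Finset.add_sum_erase Finset.univ _ (Finset.mem_univ e.1)).symm
        rw [hev] at hsplit
        rw [hsplit, hm1, hm2] at hcons
        have hxe : x e = ((m2 - d v - m1 : ℤ) : ℝ) := by push_cast; linarith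
        rw [hxe] at hxl hxr
        have h0' : (0 : ℤ) < m2 - d v - m1 := by exact_mod_cast hxl
        have h1' : (m2 - d v - m1 : ℤ) < 1 := by exact_mod_cast hxr
        omega
    obtain ⟨σ, hσne, hσsupp, hσcons⟩ :=
      exists_circulation n F (hFE.trans hE) hFne hdeg
    set K := F.filter (fun e => σ e ≠ 0) with hKdef
    have hKne : K.Nonempty := by
      obtain ⟨e, he⟩ := Function.ne_iff.1 hσne
      have heF : e ∈ F := by
        by_contra hc
        exact he (hσsupp e hc)
      exact ⟨e, Finset.mem_filter.2 ⟨heF, he⟩⟩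
    set bound : (Fin n × Fin n) → ℝ :=
      fun e => if 0 < σ e then (1 - x e) / σ e else x e / (-σ e) with hbdef
    have hbpos : ∀ e ∈ K, 0 < bound e := by
      intro e he
      rw [hKdef, Finset.mem_filter] at he
      obtain ⟨hl, hr⟩ := hfrac e he.1
      by_cases hs : 0 < σ e
      · rw [hbdef]; simp only [if_pos hs]; exact div_pos (by linarith) hs
      · rw [hbdef]; simp only [if_neg hs]
        have : σ e < 0 := lt_of_le_of_ne (not_lt.1 hs) he.2
        exact div_pos hl (by linarith)
    set t := K.inf' hKne bound with htdef
    have ht : 0 < t := (Finset.lt_inf'_iff hKne).2 hbpos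
    obtain ⟨estar, hestar, htstar⟩ := Finset.exists_mem_eq_inf' hKne bound
    rw [← htdef] at htstar
    have hσstar : σ estar ≠ 0 := (Finset.mem_filter.1 hestar).2
    set x' : Fin n × Fin n → ℝ := fun e => x e + t * σ e with hx'def
    have hx'e : ∀ a, x' a = x a + t * σ a := fun a => rfl
    have hσE : ∀ e, e ∉ E → σ e = 0 := fun e he => hσsupp e (fun hc => he (hFE hc))
    have hbnd : ∀ e ∈ K, 0 ≤ x' e ∧ x' e ≤ 1 := by
      intro e he
      have heK := he
      rw [hKdef, Finset.mem_filter] at he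
      obtain ⟨hl, hr⟩ := hfrac e he.1
      have htle : t ≤ bound e := Finset.inf'_le bound heK
      by_cases hs : 0 < σ e
      · constructor
        · have h0 : 0 ≤ t * σ e := le_of_lt (mul_pos ht hs)
          rw [hx'e]; linarith
        · have h1 : t * σ e ≤ bound e * σ e := mul_le_mul_of_nonneg_right htle (le_of_lt hs)
          have h2 : bound e * σ e = 1 - x e := by
            rw [hbdef]; simp only [if_pos hs]
            exact div_mul_cancel₀ _ (ne_of_gt hs)
          rw [hx'e]; linarith
      · have hneg : σ e < 0 := lt_of_le_of_ne (not_lt.1 hs) he.2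
        have hne0 : -σ e ≠ 0 := by intro hc; apply he.2; linarith
        constructor
        · have h1 : bound e * σ e ≤ t * σ e := mul_le_mul_of_nonpos_right htle (le_of_lt hneg)
          have h2 : bound e * σ e = - x e := by
            rw [hbdef]; simp only [if_neg hs]
            calc x e / -σ e * σ e = -(x e / -σ e * -σ e) := by ring
            _ = - x e := by rw [div_mul_cancel₀ _ hne0]
          rw [hx'e]; linarith
        · have h0 : t * σ e ≤ 0 := le_of_lt (mul_neg_of_pos_of_neg ht hneg)
          rw [hx'e]; linarith
    have hmem' : memFlowPolytope n E d x' := by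
      refine ⟨?_, ?_, ?_⟩
      · intro e he
        rw [hx'def]; simp only [hx.1 e he, hσE e he, mul_zero, add_zero]
      · intro e he
        by_cases hs : σ e = 0
        · rw [hx'def]; simp only [hs, mul_zero, add_zero]; exact hx.2.1 e he
        · have heF : e ∈ F := by
            by_contra hc
            exact hs (hσsupp e hc)
          have heK : e ∈ K := Finset.mem_filter.2 ⟨heF, hs⟩
          exact hbnd e heK
      · intro v
        have h1 : (∑ i, x' (v, i)) = (∑ i, x (v, i)) + t * ∑ i, σ (v, i) := by
          rw [hx'def]; simp only; rw [Finset.sum_add_distrib, Finset.mul_sum]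
        have h2 : (∑ i, x' (i, v)) = (∑ i, x (i, v)) + t * ∑ i, σ (i, v) := by
          rw [hx'def]; simp only; rw [Finset.sum_add_distrib, Finset.mul_sum]
        have h3 : (∑ i, σ (v, i)) = ∑ i, σ (i, v) := sub_eq_zero.1 (hσcons v)
        rw [h1, h2, h3]
        have := hx.2.2 v
        linarith
    -- the new fractional set is strictly smaller
    have hstar01 : x' estar = 0 ∨ x' estar = 1 := by
      by_cases hs : 0 < σ estar
      · right
        rw [hx'e, htstar, hbdef]; simp only [if_pos hs]
        rw [div_mul_cancel₀ _ (ne_of_gt hs)]; ring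
      · left
        have hneg : σ estar < 0 := lt_of_le_of_ne (not_lt.1 hs) hσstar
        have hne0 : -σ estar ≠ 0 := by intro hc; apply hσstar; linarith
        rw [hx'e, htstar, hbdef]; simp only [if_neg hs]
        have : x estar / -σ estar * σ estar = -(x estar / -σ estar * -σ estar) := by ring
        rw [this, div_mul_cancel₀ _ hne0]; ring
    have hsub : (E.filter (fun e => x' e ≠ 0 ∧ x' e ≠ 1)) ⊆ F.erase estar := by
      intro e he
      rw [Finset.mem_filter] at he
      obtain ⟨heE, h0, h1⟩ := he
      have heF : e ∈ F := by
        by_cases hs : σ e = 0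
        · have hxx : x' e = x e := by rw [hx'def]; simp [hs]
          rw [hFdef, Finset.mem_filter]
          exact ⟨heE, by rwa [hxx] at h0, by rwa [hxx] at h1⟩
        · by_contra hc
          exact hs (hσsupp e hc)
      refine Finset.mem_erase.2 ⟨?_, heF⟩
      intro hc
      rw [hc] at h0 h1
      rcases hstar01 with h | h
      · exact h0 h
      · exact h1 h
    have hlt : (E.filter (fun e => x' e ≠ 0 ∧ x' e ≠ 1)).card < k := by
      calc (E.filter (fun e => x' e ≠ 0 ∧ x' e ≠ 1)).card
          ≤ (F.erase estar).card := Finset.card_le_card hsub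
        _ < F.card := Finset.card_erase_lt_of_mem (Finset.mem_filter.1 hestar).1
        _ = k := hk
    exact ih _ hlt x' hmem' rfl


lemma cut_identity (n : ℕ) (y : Fin n × Fin n → ℝ) (P : Fin n → Prop) :
    ∑ v ∈ Finset.univ.filter (fun v => ¬ P v), ((∑ i, y (v, i)) - ∑ i, y (i, v))
      = (∑ v ∈ Finset.univ.filter (fun v => ¬ P v),
          ∑ i ∈ Finset.univ.filter (fun i => P i), y (v, i))
        - ∑ v ∈ Finset.univ.filter (fun v => ¬ P v),
            ∑ i ∈ Finset.univ.filter (fun i => P i), y (i, v) := by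
  classical
  have hsplit : ∀ g : Fin n → Fin n → ℝ, ∀ v : Fin n, (∑ i, g v i) =
      (∑ i ∈ Finset.univ.filter (fun i => P i), g v i) +
        ∑ i ∈ Finset.univ.filter (fun i => ¬ P i), g v i :=
    fun g v => (Finset.sum_filter_add_sum_filter_not Finset.univ P (g v)).symm
  have hcomm : (∑ v ∈ Finset.univ.filter (fun v => ¬ P v),
      ∑ i ∈ Finset.univ.filter (fun i => ¬ P i), y (v, i))
      = ∑ v ∈ Finset.univ.filter (fun v => ¬ P v),
          ∑ i ∈ Finset.univ.filter (fun i => ¬ P i), y (i, v) :=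
    Finset.sum_comm
  calc ∑ v ∈ Finset.univ.filter (fun v => ¬ P v), ((∑ i, y (v, i)) - ∑ i, y (i, v))
      = ∑ v ∈ Finset.univ.filter (fun v => ¬ P v),
          (((∑ i ∈ Finset.univ.filter (fun i => P i), y (v, i)) +
            ∑ i ∈ Finset.univ.filter (fun i => ¬ P i), y (v, i)) -
           ((∑ i ∈ Finset.univ.filter (fun i => P i), y (i, v)) +
            ∑ i ∈ Finset.univ.filter (fun i => ¬ P i), y (i, v))) := by
        refine Finset.sum_congr rfl (fun v _ => ?_)
        rw [← hsplit (fun v i => y (v, i)) v, ← hsplit (fun v i => y (i, v)) v]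
    _ = _ := by
        simp only [Finset.sum_sub_distrib, Finset.sum_add_distrib]
        rw [hcomm]
        ring

lemma walk_cross {n : ℕ} (G : SimpleGraph (Fin n)) (S : Fin n → Prop) :
    ∀ a b : Fin n, G.Walk a b → ¬ S a → S b → ∃ u w, ¬ S u ∧ S w ∧ G.Adj u w := by
  classical
  intro a b p
  induction p with
  | nil => intro h1 h2; exact absurd h2 h1
  | @cons u v w h p ih =>
    intro h1 h2
    by_cases hv : S v
    · exact ⟨u, v, h1, hv, h⟩
    · exact ih hv h2

lemma reach_cross {α : Type*} (Rl : α → α → Prop) (S : α → Prop) :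
    ∀ a b : α, Relation.ReflTransGen Rl a b → ¬ S a → S b →
      ∃ u w, ¬ S u ∧ S w ∧ Rl u w := by
  classical
  intro a b h
  induction h using Relation.ReflTransGen.head_induction_on with
  | refl => intro h1 h2; exact absurd h2 h1
  | head hrel _hrest ih =>
    rename_i a' c
    intro h1 h2
    by_cases hc : S c
    · exact ⟨a', c, h1, hc, hrel⟩
    · exact ih hc h2

lemma reaches_root (n : ℕ) (E : Finset (Fin n × Fin n)) (hE : E ⊆ E0 n) (d : Fin n → ℤ)
    (hconn : (undirGraph n E).Connected)
    (x : Fin n × Fin n → ℝ) (hx : memFlowPolytope n E d x)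
    (hxo : ∀ e ∈ E, x e ∈ Set.Ioo (0:ℝ) 1)
    (f : Fin n × Fin n → ℝ) (hf : IsVertex n E d f) (r : Fin n) :
    ∀ v : Fin n, reachesIn n (flipSet n f E) v r := by
  set R := flipSet n f E with hRdef
  set S : Fin n → Prop := fun v => reachesIn n R v r with hSdef
  by_contra hcon
  push_neg at hcon
  obtain ⟨v0, hv0⟩ := hcon
  have hclose : ∀ a b : Fin n, (a, b) ∈ R → S b → S a :=
    fun a b hab hb => Relation.ReflTransGen.head hab hb
  have hSr : S r := Relation.ReflTransGen.refl
  -- f is 1 on E-edges out of the non-reaching side, 0 on E-edges into it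
  have hf1 : ∀ u w : Fin n, ¬ S u → S w → (u, w) ∈ E → f (u, w) = 1 := by
    intro u w hu hw he
    rcases hf.2 (u, w) he with h0 | h1
    · exfalso
      apply hu
      apply hclose u w _ hw
      rw [hRdef]
      apply Finset.mem_image.2
      refine ⟨(u, w), he, ?_⟩
      unfold flipEdge
      rw [if_neg (by rw [h0]; norm_num)]
    · exact h1
  have hf0 : ∀ u w : Fin n, ¬ S u → S w → f (w, u) = 0 := by
    intro u w hu hw
    by_cases he : (w, u) ∈ E
    · rcases hf.2 (w, u) he with h0 | h1
      · exact h0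
      · exfalso
        apply hu
        apply hclose u w _ hw
        rw [hRdef]
        apply Finset.mem_image.2
        refine ⟨(w, u), he, ?_⟩
        unfold flipEdge
        rw [if_pos h1]
        rfl
    · exact hf.1.1 _ he
  -- sums over the cut
  have hcx := cut_identity n x S
  have hcf := cut_identity n f S
  have hdx : ∑ v ∈ Finset.univ.filter (fun v => ¬ S v), ((∑ i, x (v, i)) - ∑ i, x (i, v))
      = ∑ v ∈ Finset.univ.filter (fun v => ¬ S v), ((d v : ℝ)) :=
    Finset.sum_congr rfl (fun v _ => hx.2.2 v)
  have hdf : ∑ v ∈ Finset.univ.filter (fun v => ¬ S v), ((∑ i, f (v, i)) - ∑ i, f (i, v))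
      = ∑ v ∈ Finset.univ.filter (fun v => ¬ S v), ((d v : ℝ)) :=
    Finset.sum_congr rfl (fun v _ => hf.1.2.2 v)
  set Sb := Finset.univ.filter (fun v => ¬ S v) with hSb
  set Sa := Finset.univ.filter (fun i => S i) with hSa
  set g : Fin n × Fin n → ℝ :=
    fun p => (f (p.1, p.2) - x (p.1, p.2)) + (x (p.2, p.1) - f (p.2, p.1)) with hgdef
  have hgsum : ∑ p ∈ Sb ×ˢ Sa, g p = 0 := by
    rw [Finset.sum_product]
    have expand : ∀ v ∈ Sb, (∑ i ∈ Sa, g (v, i)) =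
        ((∑ i ∈ Sa, f (v, i)) - (∑ i ∈ Sa, x (v, i))) +
          ((∑ i ∈ Sa, x (i, v)) - (∑ i ∈ Sa, f (i, v))) := by
      intro v _
      rw [hgdef]
      simp only [Finset.sum_add_distrib, Finset.sum_sub_distrib]
    rw [Finset.sum_congr rfl expand]
    simp only [Finset.sum_add_distrib, Finset.sum_sub_distrib]
    have hxeq := hcx.symm.trans hdx
    have hfeq := hcf.symm.trans hdf
    linarith
  have hgnonneg : ∀ p ∈ Sb ×ˢ Sa, 0 ≤ g p := by
    intro p hp
    rw [Finset.mem_product, hSb, hSa, Finset.mem_filter, Finset.mem_filter] at hp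
    obtain ⟨⟨-, hu⟩, ⟨-, hw⟩⟩ := hp
    show 0 ≤ f (p.1, p.2) - x (p.1, p.2) + (x (p.2, p.1) - f (p.2, p.1))
    have t2 : 0 ≤ x (p.2, p.1) - f (p.2, p.1) := by
      rw [hf0 p.1 p.2 hu hw]
      by_cases he : (p.2, p.1) ∈ E
      · have := (hxo _ he).1; linarith
      · rw [hx.1 _ he]; norm_num
    have t1 : 0 ≤ f (p.1, p.2) - x (p.1, p.2) := by
      by_cases he : (p.1, p.2) ∈ E
      · rw [hf1 p.1 p.2 hu hw he]
        have := (hxo _ he).2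
        linarith
      · rw [hx.1 _ he, hf.1.1 _ he]
        norm_num
    linarith
  have hall := (Finset.sum_eq_zero_iff_of_nonneg hgnonneg).1 hgsum
  -- find a crossing edge of E
  obtain ⟨p⟩ := hconn.preconnected v0 r
  obtain ⟨u, w, hu, hw, hadj⟩ := walk_cross (undirGraph n E) S v0 r p hv0 hSr
  have hmem : (u, w) ∈ Sb ×ˢ Sa := by
    rw [Finset.mem_product, hSb, hSa, Finset.mem_filter, Finset.mem_filter]
    exact ⟨⟨Finset.mem_univ _, hu⟩, ⟨Finset.mem_univ _, hw⟩⟩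
  have hzero : f (u, w) - x (u, w) + (x (w, u) - f (w, u)) = 0 := hall (u, w) hmem
  have hf0' := hf0 u w hu hw
  rcases hadj.2 with he | he
  · have hf1' := hf1 u w hu hw he
    have hx1 := (hxo _ he).2
    have hx2 : 0 ≤ x (w, u) := by
      by_cases h : (w, u) ∈ E
      · exact le_of_lt (hxo _ h).1
      · rw [hx.1 _ h]
    rw [hf1', hf0'] at hzero
    linarith
  · have hx1 : 0 < x (w, u) := (hxo _ he).1
    have hx2 : x (u, w) ≤ f (u, w) := by
      by_cases h : (u, w) ∈ E
      · rw [hf1 u w hu hw h]; exact le_of_lt (hxo _ h).2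
      · rw [hx.1 _ h, hf.1.1 _ h]
    rw [hf0'] at hzero
    linarith

lemma reach_to_undir (n : ℕ) (A : Finset (Fin n × Fin n)) (hA : A ⊆ E0 n) {a b : Fin n}
    (h : reachesIn n A a b) : (undirGraph n A).Reachable a b := by
  induction h with
  | refl => exact SimpleGraph.Reachable.refl _
  | tail _hab hbc ih =>
    refine ih.trans (SimpleGraph.Adj.reachable ?_)
    refine ⟨?_, Or.inl hbc⟩
    have := hA hbc
    simp only [E0, Finset.mem_filter] at this
    exact this.2

lemma build_arb (n : ℕ) (hn : 2 ≤ n) (R : Finset (Fin n × Fin n)) (hR : R ⊆ E0 n)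
    (r : Fin n) (hreach : ∀ v, reachesIn n R v r) :
    ∃ A : Finset (Fin n × Fin n), A ⊆ R ∧ A.card = n - 1 ∧ (∀ a ∈ A, rev a ∉ A) ∧
      (undirGraph n A).Connected ∧ ∀ v, reachesIn n A v r := by
  have key : ∀ k (S : Finset (Fin n)) (A : Finset (Fin n × Fin n)),
      (Finset.univ \ S).card = k → r ∈ S → A ⊆ R → A.card + 1 = S.card →
      (∀ a ∈ A, a.1 ∈ S ∧ a.2 ∈ S) → (∀ a ∈ A, rev a ∉ A) →
      (∀ v ∈ S, reachesIn n A v r) →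
      ∃ A', A' ⊆ R ∧ A'.card + 1 = n ∧ (∀ a ∈ A', rev a ∉ A') ∧
        ∀ v : Fin n, reachesIn n A' v r := by
    intro k
    induction k using Nat.strong_induction_on with
    | _ k ih =>
    intro S A hk hrS hAR hcard hends hrev hSreach
    by_cases hSu : S = Finset.univ
    · refine ⟨A, hAR, ?_, hrev, ?_⟩
      · rw [hcard, hSu, Finset.card_univ, Fintype.card_fin]
      · intro v
        exact hSreach v (by rw [hSu]; exact Finset.mem_univ v)
    · have hdiffne : (Finset.univ \ S).Nonempty := by
        rw [Finset.sdiff_nonempty]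
        intro hc
        exact hSu (Finset.univ_subset_iff.1 hc)
      obtain ⟨v0, hv0⟩ := hdiffne
      rw [Finset.mem_sdiff] at hv0
      obtain ⟨u, w, hu, hw, huw⟩ := reach_cross (fun a b => (a, b) ∈ R) (fun v => v ∈ S)
        v0 r (hreach v0) hv0.2 hrS
      have huwne : u ≠ w := fun hc => hu (hc ▸ hw)
      have hnotA : (u, w) ∉ A := fun hc => hu (hends _ hc).1
      have hstep : (Finset.univ \ insert u S).card < k := by
        rw [← hk]
        apply Finset.card_lt_card
        constructor
        · intro a ha
          rw [Finset.mem_sdiff] at ha ⊢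
          exact ⟨ha.1, fun hc => ha.2 (Finset.mem_insert_of_mem hc)⟩
        · intro hc
          have hu' : u ∈ Finset.univ \ S := Finset.mem_sdiff.2 ⟨Finset.mem_univ _, hu⟩
          have := hc hu'
          rw [Finset.mem_sdiff] at this
          exact this.2 (Finset.mem_insert_self u S)
      refine ih _ hstep (insert u S) (insert (u, w) A) rfl
        (Finset.mem_insert_of_mem hrS) ?_ ?_ ?_ ?_ ?_
      · intro a ha
        rcases Finset.mem_insert.1 ha with h | h
        · rw [h]; exact huw
        · exact hAR h
      · rw [Finset.card_insert_of_notMem hnotA, Finset.card_insert_of_notMem hu]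
        omega
      · intro a ha
        rcases Finset.mem_insert.1 ha with h | h
        · rw [h]
          exact ⟨Finset.mem_insert_self u S, Finset.mem_insert_of_mem hw⟩
        · exact ⟨Finset.mem_insert_of_mem (hends a h).1,
            Finset.mem_insert_of_mem (hends a h).2⟩
      · intro a ha hrev'
        rcases Finset.mem_insert.1 ha with h | h
        · rcases Finset.mem_insert.1 hrev' with h2 | h2
          · rw [h] at h2
            exact huwne (congrArg Prod.fst h2).symm
          · rw [h] at h2
            exact hu (hends _ h2).2
        · rcases Finset.mem_insert.1 hrev' with h2 | h2
          · apply hu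
            have : a = (w, u) := by
              have := congrArg rev h2
              simpa [rev] using this
            rw [this] at h
            exact (hends _ h).2
          · exact hrev a h h2
      · intro v hv
        have hmono : ∀ b c : Fin n, reachesIn n A b c →
            reachesIn n (insert (u, w) A) b c := by
          intro b c hbc
          exact Relation.ReflTransGen.mono (r := fun a b => (a, b) ∈ A)
            (p := fun a b => (a, b) ∈ insert (u, w) A) (fun a b hab => Finset.mem_insert_of_mem hab) b c hbc
        rcases Finset.mem_insert.1 hv with h | h
        · rw [h]
          exact Relation.ReflTransGen.head (Finset.mem_insert_self _ _)
            (hmono w r (hSreach w hw))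
        · exact hmono v r (hSreach v h)
  obtain ⟨A, hAR, hAcard, hArev, hAreach⟩ := key (Finset.univ \ {r}).card {r} ∅ rfl
    (Finset.mem_singleton_self r) (Finset.empty_subset R) (by simp)
    (by simp) (by simp) (by intro v hv; rw [Finset.mem_singleton] at hv; rw [hv]; exact Relation.ReflTransGen.refl)
  refine ⟨A, hAR, by omega, hArev, ?_, hAreach⟩
  have hNE : Nonempty (Fin n) := ⟨⟨0, by omega⟩⟩
  rw [SimpleGraph.connected_iff]
  refine ⟨fun a b => ?_, hNE⟩
  exact (reach_to_undir n A (hAR.trans hR) (hAreach a)).trans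
    (reach_to_undir n A (hAR.trans hR) (hAreach b)).symm

/-- for every root `r` there exist a vertex `f` and a directed
tree `T` in `E` such that `Flip_f(T)` is an arborescence rooted at `r`. -/
theorem exists_flow_and_tree_every_root (n : ℕ) (hn : 2 ≤ n)
    (E : Finset (Fin n × Fin n)) (hE : E ⊆ E0 n) (d : Fin n → ℤ)
    (hconn : (undirGraph n E).Connected)
    (hne : ∃ x, memFlowPolytope n E d x ∧ ∀ e ∈ E, x e ∈ Set.Ioo (0 : ℝ) 1) :
    ∀ r : Fin n, ∃ f : Fin n × Fin n → ℝ, IsVertex n E d f ∧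
      ∃ T : Finset (Fin n × Fin n), IsDirTree n T ∧ T ⊆ E ∧
        IsArb n r (flipSet n f T) := by
  intro r
  obtain ⟨x, hx, hxo⟩ := hne
  obtain ⟨f, hf⟩ := exists_vertex n E hE d _ x hx rfl
  refine ⟨f, hf, ?_⟩
  have hreach := reaches_root n E hE d hconn x hx hxo f hf r
  have hRE0 : flipSet n f E ⊆ E0 n := by
    intro a ha
    obtain ⟨e, he, rfl⟩ := Finset.mem_image.1 ha
    have heE0 := hE he
    simp only [E0, Finset.mem_filter, Finset.mem_univ, true_and] at heE0 ⊢
    unfold flipEdge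
    split
    · exact fun hc => heE0 hc.symm
    · exact heE0
  obtain ⟨A, hAR, hAcard, hArev, hAconn, hAreach⟩ := build_arb n hn _ hRE0 r hreach
  set g : (Fin n × Fin n) → (Fin n × Fin n) :=
    fun a => if a ∈ E ∧ f a ≠ 1 then a else rev a with hgdef
  have hrevrev : ∀ a : Fin n × Fin n, rev (rev a) = a := fun a => rfl
  have hginv : ∀ a : Fin n × Fin n, g a = a ∨ g a = rev a := by
    intro a
    by_cases hc : a ∈ E ∧ f a ≠ 1
    · left; show (if a ∈ E ∧ f a ≠ 1 then a else rev a) = a; rw [if_pos hc]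
    · right; show (if a ∈ E ∧ f a ≠ 1 then a else rev a) = rev a; rw [if_neg hc]
  have hg : ∀ a ∈ A, g a ∈ E ∧ flipEdge n f (g a) = a := by
    intro a ha
    have haR := hAR ha
    obtain ⟨e, heE, heq⟩ := Finset.mem_image.1 haR
    by_cases hc : a ∈ E ∧ f a ≠ 1
    · have hga : g a = a := by
        show (if a ∈ E ∧ f a ≠ 1 then a else rev a) = a
        rw [if_pos hc]
      rw [hga]
      exact ⟨hc.1, by unfold flipEdge; rw [if_neg hc.2]⟩
    · have hkey : e = rev a ∧ f (rev a) = 1 := by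
        unfold flipEdge at heq
        by_cases hfe : f e = 1
        · rw [if_pos hfe] at heq
          have he' : e = rev a := by rw [← heq, hrevrev]
          refine ⟨he', ?_⟩
          rw [← he']
          exact hfe
        · rw [if_neg hfe] at heq
          exfalso
          apply hc
          rw [← heq]
          exact ⟨heE, hfe⟩
      have hga : g a = rev a := by
        show (if a ∈ E ∧ f a ≠ 1 then a else rev a) = rev a
        rw [if_neg hc]
      rw [hga]
      constructor
      · rw [← hkey.1]; exact heE
      · unfold flipEdge
        rw [if_pos hkey.2, hrevrev]
  set T := A.image g with hTdef
  have hTE : T ⊆ E := by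
    intro t ht
    obtain ⟨a, ha, rfl⟩ := Finset.mem_image.1 ht
    exact (hg a ha).1
  have hflipT : flipSet n f T = A := by
    show (A.image g).image (flipEdge n f) = A
    rw [Finset.image_image]
    have h1 : A.image (flipEdge n f ∘ g) = A.image id :=
      Finset.image_congr (fun a ha => (hg a ha).2)
    rw [h1, Finset.image_id]
  have hinj : Set.InjOn g A := by
    intro a1 h1 a2 h2 heq
    rw [Finset.mem_coe] at h1 h2
    rcases hginv a1 with e1 | e1 <;> rcases hginv a2 with e2 | e2
    · rw [e1, e2] at heq; exact heq
    · rw [e1, e2] at heq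
      exfalso
      exact hArev a2 h2 (by rw [← heq]; exact h1)
    · rw [e1, e2] at heq
      exfalso
      exact hArev a1 h1 (by rw [heq]; exact h2)
    · rw [e1, e2] at heq
      have := congrArg rev heq
      rwa [hrevrev, hrevrev] at this
  have hTcard : T.card = n - 1 := by
    rw [hTdef, Finset.card_image_of_injOn hinj, hAcard]
  have hmemT : ∀ u v : Fin n, ((u, v) ∈ T ∨ (v, u) ∈ T) ↔ ((u, v) ∈ A ∨ (v, u) ∈ A) := by
    intro u v
    constructor
    · rintro (ht | ht)
      · obtain ⟨a, ha, hga⟩ := Finset.mem_image.1 ht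
        rcases hginv a with h | h
        · left; rw [h] at hga; rwa [← hga]
        · right
          rw [h] at hga
          have h3 := congrArg rev hga
          rw [hrevrev] at h3
          have h4 : a = (v, u) := h3
          rwa [← h4]
      · obtain ⟨a, ha, hga⟩ := Finset.mem_image.1 ht
        rcases hginv a with h | h
        · right; rw [h] at hga; rwa [← hga]
        · left
          rw [h] at hga
          have h3 := congrArg rev hga
          rw [hrevrev] at h3
          have h4 : a = (u, v) := h3
          rwa [← h4]
    · rintro (ha | ha)
      · rcases hginv (u, v) with h | h
        · left; rw [← h]; exact Finset.mem_image_of_mem g ha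
        · right; rw [show ((v, u) : Fin n × Fin n) = rev (u, v) from rfl, ← h]
          exact Finset.mem_image_of_mem g ha
      · rcases hginv (v, u) with h | h
        · right; rw [← h]; exact Finset.mem_image_of_mem g ha
        · left; rw [show ((u, v) : Fin n × Fin n) = rev (v, u) from rfl, ← h]
          exact Finset.mem_image_of_mem g ha
  have hund : undirGraph n T = undirGraph n A := by
    ext u v
    show (u ≠ v ∧ _) ↔ (u ≠ v ∧ _)
    exact and_congr_right (fun _ => hmemT u v)
  refine ⟨T, ⟨hTE.trans hE, hTcard, by rw [hund]; exact hAconn⟩, hTE, ?_⟩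
  rw [hflipT]
  exact ⟨⟨hAR.trans hRE0, hAcard, hAconn⟩, hAreach⟩
end
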